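/- arXiv:2310.09351 — 4 statements merged into one kernel-verified Lean document; each statement's English description precedes it below -/
import Mathlib

section
/- Let k > 0, n = k+1, and let Φ : [0,∞) → [0,∞) be a strictly convex C¹ function with Φ(0) = Φ'(0) = 0. If there are constants c₁, c₂ > 0 with c₁ x^{1+1/k} ≤ Φ(x) ≤ c₂ x^{1+1/k} for all x ≥ 0, then there are constants C₁, C₂ > 0 with C₁ x^{1+1/n} ≤ Ψ(x) ≤ C₂ x^{1+1/n} for all x ≥ 0. -/
open MeasureTheory Filter Real Set
open scoped Topology ENNReal NNReal RealInnerProductSpace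

noncomputable section

abbrev Plane : Type := EuclideanSpace ℝ (Fin 2)
abbrev Phase : Type := Plane × Plane

/-- Gravitational potential induced by a density on the plane. -/
def Upot (ρ : Plane → ℝ) (x : Plane) : ℝ := -∫ y : Plane, ρ y / dist x y

/-- Kinetic energy. -/
def Ekin (f : Phase → ℝ) : ℝ := ∫ p : Phase, (‖p.2‖ ^ 2 / 2) * f p

/-- Casimir functional. -/
def Casimir (Φ : ℝ → ℝ) (f : Phase → ℝ) : ℝ := ∫ p : Phase, Φ (f p)

/-- Spatial density induced by a phase-space density. -/
def spatialDensity (f : Phase → ℝ) (x : Plane) : ℝ := ∫ v : Plane, f (x, v)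

/-- Self-interaction potential energy. -/
def Epot1 (ρ : Plane → ℝ) : ℝ := -(1 / 2) * ∫ x : Plane, ∫ y : Plane, ρ x * ρ y / dist x y

/-- External potential energy. -/
def EpotExt (ρext ρ : Plane → ℝ) : ℝ := -∫ x : Plane, ∫ y : Plane, ρ x * ρext y / dist x y

/-- Total potential energy. -/
def Epot (ρext ρ : Plane → ℝ) : ℝ := Epot1 ρ + EpotExt ρext ρ

/-- Casimir-Energy functional. -/
def EC (Φ : ℝ → ℝ) (ρext : Plane → ℝ) (f : Phase → ℝ) : ℝ :=
  Ekin f + Epot ρext (spatialDensity f) + Casimir Φ f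

/-- The feasible set `F_M`. -/
def FM (Φ : ℝ → ℝ) (M : ℝ) : Set (Phase → ℝ) :=
  {f | Integrable f ∧ (∀ p, 0 ≤ f p) ∧
       Integrable (fun p : Phase => (‖p.2‖ ^ 2 / 2) * f p) ∧
       Integrable (fun p : Phase => Φ (f p)) ∧
       (∫ p : Phase, f p) = M}

/-- The integrand functional defining `Ψ`. -/
def Ifun (Φ : ℝ → ℝ) (g : Plane → ℝ) : ℝ := ∫ v : Plane, ((‖v‖ ^ 2 / 2) * g v + Φ (g v))

/-- The constraint set for `Ψ`. -/
def Gset (Φ : ℝ → ℝ) (r : ℝ) : Set (Plane → ℝ) :=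
  {g | Integrable g ∧ (∀ v, 0 ≤ g v) ∧
       Integrable (fun v : Plane => (‖v‖ ^ 2 / 2) * g v + Φ (g v)) ∧
       (∫ v : Plane, g v) = r}

/-- The reduced Casimir function `Ψ`. -/
def Psi (Φ : ℝ → ℝ) (r : ℝ) : ℝ := sInf (Ifun Φ '' Gset Φ r)

/-- The reduced feasible set `F_M^r`. -/
def FMr (Φ : ℝ → ℝ) (M : ℝ) : Set (Plane → ℝ) :=
  {ρ | Integrable ρ ∧ (∀ x, 0 ≤ ρ x) ∧ MemLp ρ (ENNReal.ofReal (4 / 3)) ∧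
       Integrable (fun x => Psi Φ (ρ x)) ∧ (∫ x : Plane, ρ x) = M}

/-- The reduced Casimir-Energy functional. -/
def ECr (Φ : ℝ → ℝ) (ρext ρ : Plane → ℝ) : ℝ :=
  (∫ x : Plane, Psi Φ (ρ x)) + Epot ρext ρ

/-- The infimum of the reduced problem. -/
def IM (Φ : ℝ → ℝ) (ρext : Plane → ℝ) (M : ℝ) : ℝ := sInf (ECr Φ ρext '' FMr Φ M)

/-- Inverse of the derivative (on `[0,∞)`) of a function, extended by `0` on `(-∞,0]`. -/
def invDerivOn (F : ℝ → ℝ) (y : ℝ) : ℝ :=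
  if y ≤ 0 then 0 else Function.invFun (derivWithin F (Set.Ici 0)) y

/-- A density on the plane is spherically symmetric and nonincreasing. -/
def SphSymmDecr (ρ : Plane → ℝ) : Prop :=
  ∃ φ : ℝ → ℝ, AntitoneOn φ (Set.Ici 0) ∧ (∀ r ∈ Set.Ici (0 : ℝ), 0 ≤ φ r) ∧
    ∀ x : Plane, ρ x = φ ‖x‖

/-- A density on the plane is strictly symmetric decreasing. -/
def StrictSphSymmDecr (ρ : Plane → ℝ) : Prop :=
  ∃ φ : ℝ → ℝ, StrictAntiOn φ (Set.Ici 0) ∧ (∀ r ∈ Set.Ici (0 : ℝ), 0 ≤ φ r) ∧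
    ∀ x : Plane, ρ x = φ ‖x‖

/-- Weak convergence in `L^p`, tested against all elements of the dual `L^q`. -/
def TendstoWeakly {α : Type*} [MeasurableSpace α] (μ : Measure α) (q : ℝ)
    (ρ : ℕ → α → ℝ) (ρ₀ : α → ℝ) : Prop :=
  ∀ g : α → ℝ, MemLp g (ENNReal.ofReal q) μ →
    Tendsto (fun i => ∫ x, ρ i x * g x ∂μ) atTop (𝓝 (∫ x, ρ₀ x * g x ∂μ))

/-- Boundedness of a sequence in `L^p`. -/
def BoundedLp {α : Type*} [MeasurableSpace α] (μ : Measure α) (p : ℝ)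
    (ρ : ℕ → α → ℝ) : Prop :=
  ∃ C : ℝ, ∀ i, eLpNorm (ρ i) (ENNReal.ofReal p) μ ≤ ENNReal.ofReal C


def V1 : ℝ := (volume (Metric.ball (0:Plane) 1)).toReal

lemma V1_pos : 0 < V1 := by
  have h1 : 0 < volume (Metric.ball (0:Plane) 1) := Metric.measure_ball_pos _ _ one_pos
  have h2 : volume (Metric.ball (0:Plane) 1) < ⊤ := measure_ball_lt_top
  exact ENNReal.toReal_pos h1.ne' h2.ne

lemma vol_ball {R : ℝ} (hR : 0 ≤ R) :
    (volume (Metric.ball (0:Plane) R)).toReal = R^2 * V1 := by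
  rw [Measure.addHaar_ball _ _ hR]
  have : Module.finrank ℝ Plane = 2 := finrank_euclideanSpace_fin
  rw [this, V1, ENNReal.toReal_mul, ENNReal.toReal_ofReal (by positivity)]

example : NullSingletonClass (volume : Measure Plane) := inferInstance


lemma upper_witness (Φ : ℝ → ℝ) (hPhi0 : Φ 0 = 0)
    (hPhiNonneg : ∀ x : ℝ, 0 ≤ x → 0 ≤ Φ x)
    {x R : ℝ} (hx : 0 < x) (hR : 0 < R) :
    ∃ g ∈ Gset Φ x, Ifun Φ g ≤ x * R^2/2 + Φ (x/(R^2*V1)) * (R^2*V1) := by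
  set B : Set Plane := Metric.ball 0 R with hB
  have hBm : MeasurableSet B := measurableSet_ball
  have hBfin : volume B ≠ ⊤ := measure_ball_lt_top.ne
  set V : ℝ := R^2*V1 with hV
  have hVpos : 0 < V := by have := V1_pos; positivity
  have hVeq : (volume B).toReal = V := vol_ball hR.le
  set lam : ℝ := x / V with hlam
  have hlampos : 0 < lam := div_pos hx hVpos
  set g : Plane → ℝ := B.indicator (fun _ => lam) with hg
  have hgint : Integrable g := by
    rw [hg, integrable_indicator_iff hBm]
    exact integrableOn_const measure_ball_lt_top.ne
  have hgpos : ∀ v, 0 ≤ g v := fun v => Set.indicator_nonneg (fun _ _ => hlampos.le) v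
  have hcomb : (fun v : Plane => (‖v‖ ^ 2 / 2) * g v + Φ (g v))
      = B.indicator (fun v => (‖v‖ ^ 2 / 2) * lam + Φ lam) := by
    funext v
    by_cases hv : v ∈ B
    · simp [hg, Set.indicator_of_mem hv]
    · simp [hg, Set.indicator_of_notMem hv, hPhi0]
  set M : ℝ := R^2/2 * lam + Φ lam with hM
  have hMpos : 0 ≤ M := by
    have := hPhiNonneg lam hlampos.le
    positivity
  have hMint : Integrable (B.indicator (fun _ => M)) := by
    rw [integrable_indicator_iff hBm]
    exact integrableOn_const measure_ball_lt_top.ne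
  have hle : ∀ v, (B.indicator (fun v => (‖v‖ ^ 2 / 2) * lam + Φ lam)) v
      ≤ (B.indicator (fun _ => M)) v := by
    intro v
    by_cases hv : v ∈ B
    · rw [Set.indicator_of_mem hv, Set.indicator_of_mem hv, hM]
      have hnv : ‖v‖ ≤ R := by
        have := Metric.mem_ball.1 hv
        rw [dist_zero_right] at this; exact this.le
      have : ‖v‖^2 ≤ R^2 := by
        apply pow_le_pow_left₀ (norm_nonneg _) hnv
      nlinarith
    · rw [Set.indicator_of_notMem hv, Set.indicator_of_notMem hv]
  have hcombint : Integrable (fun v : Plane => (‖v‖ ^ 2 / 2) * g v + Φ (g v)) := by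
    rw [hcomb]
    refine hMint.mono' ?_ (ae_of_all _ fun v => ?_)
    · refine AEStronglyMeasurable.indicator ?_ hBm
      exact (((continuous_norm.pow 2).div_const 2).mul continuous_const |>.add
        continuous_const).aestronglyMeasurable
    · rw [Real.norm_of_nonneg]
      · exact hle v
      · by_cases hv : v ∈ B
        · rw [Set.indicator_of_mem hv]
          have := hPhiNonneg lam hlampos.le
          positivity
        · rw [Set.indicator_of_notMem hv]
  have hgI : (∫ v : Plane, g v) = x := by
    rw [hg, integral_indicator_const _ hBm, measureReal_def, hVeq, smul_eq_mul, hlam]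
    field_simp
  refine ⟨g, ⟨hgint, hgpos, hcombint, hgI⟩, ?_⟩
  have h1 : Ifun Φ g ≤ ∫ v : Plane, (B.indicator (fun _ => M)) v := by
    rw [Ifun, hcomb]
    exact integral_mono (by rwa [← hcomb]) hMint hle
  rw [integral_indicator_const _ hBm, measureReal_def, hVeq, smul_eq_mul] at h1
  calc Ifun Φ g ≤ V * M := h1
    _ = x * R^2/2 + Φ lam * V := by rw [hM, hlam]; field_simp


set_option maxHeartbeats 2000000 in
lemma lower_bound (Φ : ℝ → ℝ) {k c₁ : ℝ} (hk : 0 < k) (hc₁ : 0 < c₁)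
    (hPhiNonneg : ∀ x : ℝ, 0 ≤ x → 0 ≤ Φ x)
    (hlow : ∀ x : ℝ, 0 ≤ x → c₁ * x ^ (1 + 1 / k) ≤ Φ x)
    (hPhiCont : Continuous fun t : ℝ => Φ (max t 0))
    {x : ℝ} (hx : 0 < x) {g : Plane → ℝ} (hg : g ∈ Gset Φ x) :
    ((2:ℝ)^(k+1) * 4 * V1 / c₁^k)^(-(1/(k+1))) * x ^ (1 + 1/(k+1)) ≤ Ifun Φ g := by
  obtain ⟨hgint, hgpos, hcombint, hgI⟩ := hg
  set n : ℝ := k + 1 with hn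
  have hn1 : 1 < n := by simp [hn]; linarith
  have hnpos : 0 < n := by linarith
  set p : ℝ := 1 + 1/k with hp
  have hp1 : 1 < p := by simp [hp]; positivity
  have hppos : 0 < p := by linarith
  have hpq : p.HolderConjugate n := (Real.holderConjugate_iff_eq_conjExponent hp1).2 (by rw [hp, hn]; field_simp; ring)
  -- measurability
  have hgm : AEStronglyMeasurable g volume := hgint.1
  have hPhig_m : AEStronglyMeasurable (fun v => Φ (g v)) volume := by
    have h := hPhiCont.comp_aestronglyMeasurable hgm
    have : (fun v => Φ (max (g v) 0)) = fun v => Φ (g v) := by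
      funext v; rw [max_eq_left (hgpos v)]
    rwa [← this]
  have hkin_m : AEStronglyMeasurable (fun v : Plane => (‖v‖ ^ 2 / 2) * g v) volume :=
    ((continuous_norm.pow 2).div_const 2).aestronglyMeasurable.mul hgm
  -- integrability of the two pieces
  have hkin_int : Integrable (fun v : Plane => (‖v‖ ^ 2 / 2) * g v) := by
    refine hcombint.mono' hkin_m (ae_of_all _ fun v => ?_)
    have h1 : 0 ≤ (‖v‖ ^ 2 / 2) * g v := by have := hgpos v; positivity
    rw [Real.norm_of_nonneg h1]
    have := hPhiNonneg (g v) (hgpos v); linarith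
  have hPhig_int : Integrable (fun v => Φ (g v)) := by
    refine hcombint.mono' hPhig_m (ae_of_all _ fun v => ?_)
    rw [Real.norm_of_nonneg (hPhiNonneg (g v) (hgpos v))]
    have h1 : 0 ≤ (‖v‖ ^ 2 / 2) * g v := by have := hgpos v; positivity
    linarith
  set K : ℝ := ∫ v : Plane, (‖v‖ ^ 2 / 2) * g v with hK
  set C : ℝ := ∫ v : Plane, Φ (g v) with hC
  have hS : Ifun Φ g = K + C := integral_add hkin_int hPhig_int
  have hK0 : 0 ≤ K := integral_nonneg fun v => by have := hgpos v; positivity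
  have hC0 : 0 ≤ C := integral_nonneg fun v => hPhiNonneg (g v) (hgpos v)
  -- K is positive
  have hKpos : 0 < K := by
    rcases hK0.lt_or_eq with h | h
    · exact h
    · exfalso
      have hz : (fun v : Plane => (‖v‖ ^ 2 / 2) * g v) =ᵐ[volume] 0 := by
        rw [← integral_eq_zero_iff_of_nonneg (fun v => by have := hgpos v; positivity) hkin_int]
        exact h.symm
      have hne : ∀ᵐ v : Plane, v ≠ 0 := by
        rw [ae_iff]
        simpa using measure_singleton (0 : Plane)
      have hg0 : g =ᵐ[volume] 0 := by
        filter_upwards [hz, hne] with v hv hv'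
        have hnv : ‖v‖ ≠ 0 := norm_ne_zero_iff.2 hv'
        simp only [Pi.zero_apply] at hv ⊢
        have : ‖v‖ ^ 2 / 2 ≠ 0 := by positivity
        exact (mul_eq_zero.1 hv).resolve_left this
      rw [integral_congr_ae hg0] at hgI
      simp at hgI
      exact hx.ne' hgI.symm
  -- the function g^p
  have hgp_m : AEStronglyMeasurable (fun v => g v ^ p) volume :=
    (Real.continuous_rpow_const hppos.le).comp_aestronglyMeasurable hgm
  have hgp_int : Integrable (fun v => g v ^ p) := by
    refine (hPhig_int.const_mul (1/c₁)).mono' hgp_m (ae_of_all _ fun v => ?_)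
    rw [Real.norm_of_nonneg (Real.rpow_nonneg (hgpos v) p)]
    have := hlow (g v) (hgpos v)
    rw [div_mul_eq_mul_div, le_div_iff₀ hc₁, one_mul]
    linarith
  set A : ℝ := ∫ v : Plane, g v ^ p with hA
  have hA0 : 0 ≤ A := integral_nonneg fun v => Real.rpow_nonneg (hgpos v) p
  have hAle : A ≤ C / c₁ := by
    rw [le_div_iff₀ hc₁, mul_comm]
    calc c₁ * A = ∫ v : Plane, c₁ * g v ^ p := (integral_const_mul _ _).symm
      _ ≤ C := integral_mono (hgp_int.const_mul c₁) hPhig_int fun v => hlow (g v) (hgpos v)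
  -- Memℒp g p
  have hp0' : ENNReal.ofReal p ≠ 0 := by simp [ENNReal.ofReal_eq_zero, not_le, hppos]
  have hptop : ENNReal.ofReal p ≠ ⊤ := ENNReal.ofReal_ne_top
  have hgLp : MemLp g (ENNReal.ofReal p) volume := by
    rw [← memLp_norm_rpow_iff hgm hp0' hptop, ENNReal.toReal_ofReal hppos.le,
      ENNReal.div_self hp0' hptop, memLp_one_iff_integrable]
    refine hgp_int.congr (ae_of_all _ fun v => ?_)
    show g v ^ p = ‖g v‖ ^ p
    rw [Real.norm_of_nonneg (hgpos v)]
  -- the cutoff radius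
  set R : ℝ := Real.sqrt (4*K/x) with hRdef
  have hR2 : R^2 = 4*K/x := Real.sq_sqrt (by positivity)
  have hRpos : 0 < R := Real.sqrt_pos.2 (by positivity)
  set B : Set Plane := Metric.ball 0 R with hBdef
  have hBm : MeasurableSet B := measurableSet_ball
  set χ : Plane → ℝ := B.indicator (fun _ => (1:ℝ)) with hχdef
  have hχ_nonneg : ∀ v, 0 ≤ χ v := fun v => Set.indicator_nonneg (fun _ _ => zero_le_one) v
  have hχ_le_one : ∀ v, χ v ≤ 1 := by
    intro v; by_cases hv : v ∈ B
    · rw [hχdef, Set.indicator_of_mem hv]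
    · rw [hχdef, Set.indicator_of_notMem hv]; exact zero_le_one
  have hχm : AEStronglyMeasurable χ volume :=
    (aestronglyMeasurable_const.indicator hBm)
  have hχLq : MemLp χ (ENNReal.ofReal n) volume :=
    memLp_indicator_const _ hBm 1 (Or.inr measure_ball_lt_top.ne)
  have hχq : (fun v => χ v ^ n) = χ := by
    funext v; by_cases hv : v ∈ B
    · rw [hχdef]; simp [Set.indicator_of_mem hv]
    · rw [hχdef]; simp [Set.indicator_of_notMem hv, Real.zero_rpow hnpos.ne']
  have hχI : (∫ v : Plane, χ v) = R^2 * V1 := by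
    rw [hχdef, integral_indicator_const _ hBm, smul_eq_mul, mul_one, hBdef, measureReal_def, vol_ball hRpos.le]
  have hHold : ∫ v : Plane, g v * χ v
      ≤ (∫ v : Plane, g v ^ p) ^ (1/p) * (∫ v : Plane, χ v ^ n) ^ (1/n) :=
    integral_mul_le_Lp_mul_Lq_of_nonneg hpq (ae_of_all _ hgpos) (ae_of_all _ hχ_nonneg) hgLp hχLq
  rw [hχq, hχI, ← hA] at hHold
  -- splitting the mass
  have hgχ_int : Integrable (fun v => g v * χ v) := by
    refine hgint.mono' (hgm.mul hχm) (ae_of_all _ fun v => ?_)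
    rw [Real.norm_of_nonneg (mul_nonneg (hgpos v) (hχ_nonneg v))]
    nlinarith [hgpos v, hχ_nonneg v, hχ_le_one v]
  have hrest_int : Integrable (fun v => g v * (1 - χ v)) := by
    refine hgint.mono' (hgm.mul (aestronglyMeasurable_const.sub hχm)) (ae_of_all _ fun v => ?_)
    rw [Real.norm_of_nonneg (mul_nonneg (hgpos v) (by linarith [hχ_le_one v]))]
    nlinarith [hgpos v, hχ_nonneg v, hχ_le_one v]
  have hsplit : x = (∫ v : Plane, g v * χ v) + ∫ v : Plane, g v * (1 - χ v) := by
    rw [← integral_add hgχ_int hrest_int, ← hgI]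
    congr 1; funext v; ring
  have hrest_le : (∫ v : Plane, g v * (1 - χ v)) ≤ 2/R^2 * K := by
    have hpt : ∀ v : Plane, g v * (1 - χ v) ≤ 2/R^2 * ((‖v‖^2/2) * g v) := by
      intro v; by_cases hv : v ∈ B
      · rw [hχdef, Set.indicator_of_mem hv]
        have h1 := hgpos v; have h2 := sq_nonneg ‖v‖
        have h0 : (0:ℝ) < R^2 := pow_pos hRpos 2
        simp only [sub_self, mul_zero]
        exact mul_nonneg (div_nonneg (by norm_num) (sq_nonneg R))
          (mul_nonneg (div_nonneg h2 (by norm_num)) h1)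
      · rw [hχdef, Set.indicator_of_notMem hv]
        have hnv : R ≤ ‖v‖ := by
          have := Metric.mem_ball.not.1 hv
          rw [dist_zero_right] at this; linarith [not_lt.1 this]
        have hnv2 : R^2 ≤ ‖v‖^2 := by nlinarith [hRpos, norm_nonneg v]
        have h0 : (0:ℝ) < R^2 := pow_pos hRpos 2
        rw [sub_zero, mul_one]
        rw [div_mul_eq_mul_div, le_div_iff₀ h0]
        nlinarith [hgpos v]
    calc (∫ v : Plane, g v * (1 - χ v)) ≤ ∫ v : Plane, 2/R^2 * ((‖v‖^2/2) * g v) :=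
          integral_mono hrest_int (hkin_int.const_mul _) hpt
      _ = 2/R^2 * K := integral_const_mul _ _
  have h2K : 2/R^2 * K = x/2 := by
    rw [hR2]; field_simp; ring
  have hgχ0 : 0 ≤ ∫ v : Plane, g v * χ v :=
    integral_nonneg fun v => mul_nonneg (hgpos v) (hχ_nonneg v)
  -- the key inequality
  set W : ℝ := R^2 * V1 with hWdef
  have hWpos : 0 < W := by have := V1_pos; positivity
  have hkey : x/2 ≤ A^(1/p) * W^(1/n) := by
    rw [hsplit]; rw [h2K] at hrest_le
    have := hHold
    linarith
  -- raise to the n-th power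
  set S : ℝ := Ifun Φ g with hSdef
  have hSpos : 0 < S := by rw [hS]; linarith
  have hxn : (x/2)^n ≤ A^k * W := by
    have h1 : (x/2)^n ≤ (A^(1/p) * W^(1/n))^n :=
      Real.rpow_le_rpow (by positivity) hkey hnpos.le
    have h2 : (A^(1/p) * W^(1/n))^n = A^((1/p)*n) * W^((1/n)*n) := by
      rw [Real.mul_rpow (Real.rpow_nonneg hA0 _) (Real.rpow_nonneg hWpos.le _),
        ← Real.rpow_mul hA0, ← Real.rpow_mul hWpos.le]
    have h3 : (1/p)*n = k := by rw [hp, hn]; field_simp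
    have h4 : (1/n)*n = 1 := by field_simp
    rw [h2, h3, h4, Real.rpow_one] at h1
    exact h1
  -- bound A and W by S
  have hCS : C ≤ S := by rw [hS]; linarith
  have hKS : K ≤ S := by rw [hS]; linarith
  have hAS : A ≤ S/c₁ := hAle.trans (by gcongr)
  have hAkS : A^k ≤ S^k/c₁^k := by
    have := Real.rpow_le_rpow hA0 hAS hk.le
    rwa [Real.div_rpow hSpos.le hc₁.le] at this
  have hWS : W ≤ 4*S*V1/x := by
    have e : W = 4*K*V1/x := by rw [hWdef, hR2]; ring
    rw [e]
    gcongr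
    exact V1_pos.le
  have hmain : (x/2)^n ≤ (S^k/c₁^k) * (4*S*V1/x) :=
    hxn.trans (mul_le_mul hAkS hWS hWpos.le (by positivity))
  have h2n : (0:ℝ) < (2:ℝ)^n := Real.rpow_pos_of_pos two_pos n
  have hck : (0:ℝ) < c₁^k := Real.rpow_pos_of_pos hc₁ k
  set D : ℝ := (2:ℝ)^n * 4 * V1 / c₁^k with hDdef
  have hDpos : 0 < D := by have := V1_pos; positivity
  have hD : x^(n+1) ≤ D * S^n := by
    have e1 : x^(n+1) = x^n * x := by rw [Real.rpow_add hx, Real.rpow_one]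
    have e2 : S^n = S^k * S := by rw [hn, Real.rpow_add hSpos, Real.rpow_one]
    have e3 : (x/2)^n = x^n/(2:ℝ)^n := Real.div_rpow hx.le (by norm_num) n
    rw [e3] at hmain
    have hxnpos : (0:ℝ) ≤ x^n := Real.rpow_nonneg hx.le n
    rw [e1, e2, hDdef]
    calc x^n * x = ((2:ℝ)^n*x) * (x^n/(2:ℝ)^n) := by field_simp
      _ ≤ ((2:ℝ)^n*x) * (S^k/c₁^k * (4*S*V1/x)) :=
          mul_le_mul_of_nonneg_left hmain (by positivity)
      _ = (2:ℝ)^n * 4 * V1 / c₁^k * (S^k*S) := by field_simp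
  -- conclude
  have h1 : x^(n+1)/D ≤ S^n := by
    rw [div_le_iff₀ hDpos]; linarith
  have h2 : (x^(n+1)/D)^(1/n) ≤ (S^n)^(1/n) :=
    Real.rpow_le_rpow (by positivity) h1 (by positivity)
  have h3 : (S^n)^(1/n) = S := by
    rw [← Real.rpow_mul hSpos.le, mul_one_div_cancel hnpos.ne', Real.rpow_one]
  have h4 : (x^(n+1)/D)^(1/n) = D^(-(1/n)) * x^(1+1/n) := by
    rw [Real.div_rpow (Real.rpow_nonneg hx.le _) hDpos.le, ← Real.rpow_mul hx.le]
    have e5 : (n+1)*(1/n) = 1 + 1/n := by field_simp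
    rw [e5, Real.rpow_neg hDpos.le, div_eq_mul_inv, mul_comm]
  rw [h3, h4] at h2
  exact le_trans (le_of_eq rfl) h2


lemma ifun_nonneg (Φ : ℝ → ℝ) (hPhiNonneg : ∀ x : ℝ, 0 ≤ x → 0 ≤ Φ x) {r : ℝ} :
    ∀ y ∈ Ifun Φ '' Gset Φ r, 0 ≤ y := by
  rintro y ⟨g, hg, rfl⟩
  refine integral_nonneg fun v => add_nonneg ?_ (hPhiNonneg _ (hg.2.1 v))
  have := hg.2.1 v
  positivity

set_option maxHeartbeats 1000000 in
theorem psi_two_sided_growth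
    (k n c₁ c₂ : ℝ) (hk : 0 < k) (hn : n = k + 1) (hc₁ : 0 < c₁) (hc₂ : 0 < c₂)
    (Φ : ℝ → ℝ)
    (hPhiConv : StrictConvexOn ℝ (Set.Ici 0) Φ)
    (hPhiC1 : ContDiffOn ℝ 1 Φ (Set.Ici 0))
    (hPhiNonneg : ∀ x : ℝ, 0 ≤ x → 0 ≤ Φ x)
    (hPhi0 : Φ 0 = 0)
    (hPhi'0 : derivWithin Φ (Set.Ici 0) 0 = 0)
    (hlow : ∀ x : ℝ, 0 ≤ x → c₁ * x ^ (1 + 1 / k) ≤ Φ x)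
    (hupp : ∀ x : ℝ, 0 ≤ x → Φ x ≤ c₂ * x ^ (1 + 1 / k)) :
    ∃ C₁ > (0 : ℝ), ∃ C₂ > (0 : ℝ), ∀ x : ℝ, 0 ≤ x →
      C₁ * x ^ (1 + 1 / n) ≤ Psi Φ x ∧ Psi Φ x ≤ C₂ * x ^ (1 + 1 / n) := by
  subst hn
  have hPhiCont : Continuous fun t : ℝ => Φ (max t 0) := by
    refine hPhiC1.continuousOn.comp_continuous (continuous_id.max continuous_const) ?_
    exact fun t => Set.mem_Ici.2 (le_max_right t 0)
  have hV1 := V1_pos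
  have hnpos : (0:ℝ) < k + 1 := by linarith
  have h2n : (0:ℝ) < (2:ℝ)^(k+1) := Real.rpow_pos_of_pos two_pos _
  have hck : (0:ℝ) < c₁^k := Real.rpow_pos_of_pos hc₁ k
  have hDpos : (0:ℝ) < (2:ℝ)^(k+1) * 4 * V1 / c₁^k := by positivity
  refine ⟨((2:ℝ)^(k+1) * 4 * V1 / c₁^k)^(-(1/(k+1))), Real.rpow_pos_of_pos hDpos _,
    1/2 + c₂ * V1^(-(1/k)), by have := Real.rpow_pos_of_pos hV1 (-(1/k)); positivity,
    fun x hx => ?_⟩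
  have hbdd : BddBelow (Ifun Φ '' Gset Φ x) := ⟨0, fun y hy => ifun_nonneg Φ hPhiNonneg y hy⟩
  rcases hx.eq_or_lt with h0 | hxpos
  · -- x = 0
    subst h0
    have hg0 : (fun _ : Plane => (0:ℝ)) ∈ Gset Φ 0 := by
      refine ⟨integrable_zero _ _ _, fun _ => le_refl _, ?_, by simp⟩
      have : (fun v : Plane => (‖v‖ ^ 2 / 2) * (0:ℝ) + Φ 0) = fun _ => (0:ℝ) := by
        funext v; simp [hPhi0]
      rw [this]
      exact integrable_zero _ _ _
    have hI0 : Ifun Φ (fun _ : Plane => (0:ℝ)) = 0 := by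
      rw [Ifun]
      have : (fun v : Plane => (‖v‖ ^ 2 / 2) * (0:ℝ) + Φ 0) = fun _ => (0:ℝ) := by
        funext v; simp [hPhi0]
      rw [this, integral_zero]
    have hle : Psi Φ 0 ≤ 0 := by
      rw [Psi]
      exact csInf_le hbdd ⟨_, hg0, hI0⟩
    have hge : 0 ≤ Psi Φ 0 := by
      rw [Psi]
      exact le_csInf ⟨_, ⟨_, hg0, hI0⟩⟩ (fun y hy => ifun_nonneg Φ hPhiNonneg y hy)
    have hPsi0 : Psi Φ 0 = 0 := le_antisymm hle hge
    have hz : (0:ℝ) ^ (1 + 1/(k+1)) = 0 := by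
      rw [Real.zero_rpow]; positivity
    rw [hPsi0, hz, mul_zero, mul_zero]
    exact ⟨le_refl _, le_refl _⟩
  · -- x > 0
    set R : ℝ := Real.sqrt (x ^ (1/(k+1))) with hRdef
    have hr2pos : 0 < x ^ (1/(k+1)) := Real.rpow_pos_of_pos hxpos _
    have hRpos : 0 < R := Real.sqrt_pos.2 hr2pos
    have hR2 : R^2 = x ^ (1/(k+1)) := Real.sq_sqrt hr2pos.le
    obtain ⟨g, hgmem, hgle⟩ := upper_witness Φ hPhi0 hPhiNonneg hxpos hRpos
    have hne : (Ifun Φ '' Gset Φ x).Nonempty := ⟨_, g, hgmem, rfl⟩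
    constructor
    · -- lower bound
      rw [Psi]
      refine le_csInf hne ?_
      rintro y ⟨g', hg', rfl⟩
      exact lower_bound Φ hk hc₁ hPhiNonneg hlow hPhiCont hxpos hg'
    · -- upper bound
      have h1 : Psi Φ x ≤ Ifun Φ g := csInf_le hbdd ⟨g, hgmem, rfl⟩
      refine h1.trans (hgle.trans ?_)
      -- arithmetic
      set W : ℝ := R^2 * V1 with hWdef
      have hWpos : 0 < W := by positivity
      set lam : ℝ := x / W with hlamdef
      have hlampos : 0 < lam := div_pos hxpos hWpos
      have hPhil : Φ lam ≤ c₂ * lam ^ (1 + 1/k) := hupp lam hlampos.le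
      have hterm1 : x * R^2/2 = x ^ (1 + 1/(k+1)) / 2 := by
        rw [hR2]
        congr 1
        rw [Real.rpow_add hxpos, Real.rpow_one]
      have hterm2 : lam ^ (1 + 1/k) * W = V1^(-(1/k)) * x ^ (1 + 1/(k+1)) := by
        set e : ℝ := 1 + 1/k with hedef
        set a : ℝ := x ^ (1/(k+1)) with hadef
        have ha : 0 < a := hr2pos
        have hae : (0:ℝ) < a ^ e := Real.rpow_pos_of_pos ha e
        have hV1e : (0:ℝ) < V1 ^ e := Real.rpow_pos_of_pos hV1 e
        have h1 : lam ^ e * W = x ^ e * (a ^ (1-e) * V1 ^ (1-e)) := by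
          rw [hlamdef, hWdef, hR2,
            Real.div_rpow hxpos.le (mul_nonneg ha.le hV1.le),
            Real.mul_rpow ha.le hV1.le,
            Real.rpow_sub ha, Real.rpow_sub hV1, Real.rpow_one, Real.rpow_one]
          field_simp
        have h2 : a ^ (1-e) = x ^ ((1/(k+1))*(1-e)) := by
          rw [hadef, ← Real.rpow_mul hxpos.le]
        have h3 : x ^ e * x ^ ((1/(k+1))*(1-e)) = x ^ (1 + 1/(k+1)) := by
          rw [← Real.rpow_add hxpos]
          congr 1
          rw [hedef]; field_simp; ring
        have h4 : V1 ^ (1-e) = V1 ^ (-(1/k)) := by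
          congr 1
          rw [hedef]; ring
        rw [h1, h2, h4, ← mul_assoc, h3, mul_comm]
      calc x * R^2/2 + Φ lam * W
          ≤ x * R^2/2 + (c₂ * lam ^ (1 + 1/k)) * W := by
            have : 0 ≤ W := hWpos.le
            nlinarith [hPhil, hWpos.le]
        _ = x ^ (1 + 1/(k+1)) / 2 + c₂ * (V1^(-(1/k)) * x ^ (1 + 1/(k+1))) := by
            rw [hterm1, mul_assoc, hterm2]
        _ = (1/2 + c₂ * V1^(-(1/k))) * x ^ (1 + 1/(k+1)) := by ring
end
end

section
/- Let k > 0, n = k+1, and let Φ : [0,∞) → [0,∞) be a strictly convex C¹ function with Φ(0) = Φ'(0) = 0. If there are constants c > 0 and x₀ ≥ 0 with Φ(x) ≥ c x^{1+1/k} for all x ≥ x₀, then there are constants C > 0 and x₁ ≥ 0 with Ψ(x) ≥ C x^{1+1/n} for all x ≥ x₁. -/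
open MeasureTheory Filter Real Set
open scoped Topology ENNReal NNReal RealInnerProductSpace

noncomputable section

set_option maxHeartbeats 1000000 in
theorem psi_lower_growth
    (k n c x₀ : ℝ) (hk : 0 < k) (hn : n = k + 1) (hc : 0 < c) (hx₀ : 0 ≤ x₀)
    (Φ : ℝ → ℝ)
    (hPhiConv : StrictConvexOn ℝ (Set.Ici 0) Φ)
    (hPhiC1 : ContDiffOn ℝ 1 Φ (Set.Ici 0))
    (hPhiNonneg : ∀ x : ℝ, 0 ≤ x → 0 ≤ Φ x)
    (hPhi0 : Φ 0 = 0)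
    (hPhi'0 : derivWithin Φ (Set.Ici 0) 0 = 0)
    (hlow : ∀ x : ℝ, x₀ ≤ x → c * x ^ (1 + 1 / k) ≤ Φ x) :
    ∃ C > (0 : ℝ), ∃ x₁ ≥ (0 : ℝ), ∀ x : ℝ, x₁ ≤ x →
      C * x ^ (1 + 1 / n) ≤ Psi Φ x := by
  have hn1 : (1:ℝ) < n := by rw [hn]; linarith
  have hn0 : (0:ℝ) < n := by linarith
  set p : ℝ := 1 + 1/k with hp_def
  have hk1 : (0:ℝ) < 1/k := by positivity
  have hp1 : 1 < p := by rw [hp_def]; linarith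
  have hp0 : 0 < p := by linarith
  have hnp : (n - 1) * p = n := by
    rw [hn, hp_def]; field_simp; ring
  have hpq : Real.HolderConjugate p n := by
    rw [Real.holderConjugate_iff]
    refine ⟨hp1, ?_⟩
    rw [hp_def, hn, inv_eq_one_div, inv_eq_one_div]
    field_simp
  have hπ : (0:ℝ) < Real.pi := Real.pi_pos
  have hπpn : (0:ℝ) < Real.pi ^ (p/n) := Real.rpow_pos_of_pos hπ _
  set A0 : ℝ := 2 + Real.pi ^ (p/n) / (p*c) with hA0_def
  have hA0pos : 0 < A0 := by positivity
  set β : ℝ := (n-1)/(3*n) with hβ_def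
  have hβpos : 0 < β := by rw [hβ_def]; apply div_pos <;> linarith
  set D : ℝ := x₀ ^ p * Real.pi ^ (p/n) * Real.pi with hD_def
  have hDnn : 0 ≤ D :=
    mul_nonneg (mul_nonneg (Real.rpow_nonneg hx₀ p) hπpn.le) hπ.le
  refine ⟨β / A0, by positivity, max 1 (D/(p*β)),
    le_trans zero_le_one (le_max_left _ _), ?_⟩
  intro r hr
  have hr1 : (1:ℝ) ≤ r := le_trans (le_max_left _ _) hr
  have hr0 : (0:ℝ) < r := lt_of_lt_of_le one_pos hr1
  have hrD : D / (p*β) ≤ r := le_trans (le_max_right _ _) hr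
  -- powers of r
  set s1 : ℝ := r ^ (1/n : ℝ) with hs1_def
  set t : ℝ := r ^ (-(1/n) : ℝ) with ht_def
  set u : ℝ := r ^ ((n-1)/n : ℝ) with hu_def
  have hs1pos : 0 < s1 := Real.rpow_pos_of_pos hr0 _
  have htpos : 0 < t := Real.rpow_pos_of_pos hr0 _
  have hupos : 0 < u := Real.rpow_pos_of_pos hr0 _
  have hts : t * s1 = 1 := by
    rw [ht_def, hs1_def, ← Real.rpow_add hr0]; norm_num
  have hus : u * s1 = r := by
    rw [hu_def, hs1_def, ← Real.rpow_add hr0,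
      show (n-1)/n + 1/n = 1 by field_simp; ring, Real.rpow_one]
  have htinv : t = s1⁻¹ := by
    rw [ht_def, hs1_def, Real.rpow_neg hr0.le]
  have hrpt : r ^ (1 + 1/n : ℝ) * t = r := by
    rw [ht_def, ← Real.rpow_add hr0, show (1 + 1/n) + -(1/n) = (1:ℝ) by ring,
      Real.rpow_one]
  -- the ball
  set R : ℝ := Real.sqrt s1 with hR_def
  set S : Set Plane := Metric.closedBall (0 : Plane) R with hS_def
  have hsq : R ^ 2 = s1 := Real.sq_sqrt hs1pos.le
  have hSmeas : MeasurableSet S := measurableSet_closedBall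
  have hSfin : volume S < ⊤ := measure_closedBall_lt_top
  set V : ℝ := (volume S).toReal with hV_def
  have hV : V = Real.pi * s1 := by
    rw [hV_def, hS_def, EuclideanSpace.volume_closedBall]
    simp only [Fintype.card_fin]
    rw [show ((2:ℕ):ℝ)/2 + 1 = (2:ℝ) by norm_num, Real.Gamma_two,
      show Real.sqrt Real.pi ^ (2:ℕ) = Real.pi from Real.sq_sqrt hπ.le]
    rw [ENNReal.toReal_mul, ENNReal.toReal_pow, ENNReal.toReal_ofReal (Real.sqrt_nonneg _),
      ENNReal.toReal_ofReal (by positivity : (0:ℝ) ≤ Real.pi / 1)]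
    rw [← hR_def, hsq]
    ring
  -- ε for Young's inequality
  set ε : ℝ := (u / Real.pi) ^ ((1:ℝ)/n) with hε_def
  have hbase : 0 < u / Real.pi := div_pos hupos hπ
  have hεpos : 0 < ε := Real.rpow_pos_of_pos hbase _
  have hεn : ε ^ (n:ℝ) = u / Real.pi := by
    rw [hε_def, ← Real.rpow_mul hbase.le,
      show (1:ℝ)/n * n = 1 by field_simp, Real.rpow_one]
  have hexp1 : (n-1)/n * ((1:ℝ)/n * p) = 1/n := by
    have : (n-1)/n * ((1:ℝ)/n * p) = ((n-1)*p)/(n*n) := by ring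
    rw [this, hnp]
    field_simp
  have hεp : ε ^ (p:ℝ) = s1 / Real.pi ^ (p/n) := by
    rw [hε_def, ← Real.rpow_mul hbase.le,
      Real.div_rpow hupos.le hπ.le, hu_def, ← Real.rpow_mul hr0.le, hexp1,
      show (1:ℝ)/n * p = p/n by ring, ← hs1_def]
  have hεpinv : (ε ^ (p:ℝ))⁻¹ = Real.pi ^ (p/n) * t := by
    rw [hεp, inv_div, htinv, div_eq_mul_inv]
  -- main estimate for each admissible g
  have hmain : ∀ g ∈ Gset Φ r, β / A0 * r ^ (1 + 1/n : ℝ) ≤ Ifun Φ g := by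
    rintro g ⟨hg_int, hg0, hsum_int, hg_mass⟩
    by_contra hcon
    push_neg at hcon
    clear_value p A0 β D s1 t u R S V ε
    have hK0 : ∀ v : Plane, 0 ≤ ‖v‖^2/2 * g v :=
      fun v => mul_nonneg (by positivity) (hg0 v)
    have hP0 : ∀ v : Plane, 0 ≤ Φ (g v) := fun v => hPhiNonneg _ (hg0 v)
    have hgm : AEStronglyMeasurable g volume := hg_int.aestronglyMeasurable
    have hKm : AEStronglyMeasurable (fun v : Plane => ‖v‖^2/2 * g v) volume :=
      (((continuous_norm.pow 2).div_const 2).aestronglyMeasurable).mul hgm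
    have hΦcont : Continuous (fun x : ℝ => Φ (max x 0)) := by
      apply hPhiC1.continuousOn.comp_continuous
        (continuous_id.max continuous_const)
      exact fun x => Set.mem_Ici.mpr (le_max_right _ _)
    have hPm : AEStronglyMeasurable (fun v : Plane => Φ (g v)) volume := by
      have heq : (fun v : Plane => Φ (g v)) = (fun x : ℝ => Φ (max x 0)) ∘ g := by
        funext v; simp only [Function.comp_apply, max_eq_left (hg0 v)]
      rw [heq]
      exact hΦcont.comp_aestronglyMeasurable hgm
    have hK_int : Integrable (fun v : Plane => ‖v‖^2/2 * g v) volume := by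
      apply hsum_int.mono' hKm
      refine Filter.Eventually.of_forall fun v => ?_
      rw [Real.norm_of_nonneg (hK0 v)]
      linarith only [hP0 v]
    have hP_int : Integrable (fun v : Plane => Φ (g v)) volume := by
      apply hsum_int.mono' hPm
      refine Filter.Eventually.of_forall fun v => ?_
      rw [Real.norm_of_nonneg (hP0 v)]
      linarith only [hK0 v]
    have hIfun : Ifun Φ g = (∫ v : Plane, ‖v‖^2/2 * g v) + ∫ v : Plane, Φ (g v) := by
      rw [Ifun, ← integral_add hK_int hP_int]
    set IK : ℝ := ∫ v : Plane, ‖v‖^2/2 * g v with hIK_def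
    set IP : ℝ := ∫ v : Plane, Φ (g v) with hIP_def
    have hIK0 : 0 ≤ IK := integral_nonneg hK0
    have hIP0 : 0 ≤ IP := integral_nonneg hP0
    -- tail estimate
    have htail : (∫ v in Sᶜ, g v) ≤ 2 * IK * t := by
      have hstep : ∀ v ∈ Sᶜ, g v ≤ 2/s1 * (‖v‖^2/2 * g v) := by
        intro v hv
        have hv' : R < ‖v‖ := by
          simp only [hS_def, Set.mem_compl_iff, Metric.mem_closedBall,
            dist_zero_right, not_le] at hv
          exact hv
        have h1 : s1 < ‖v‖^2 := by
          rw [← hsq]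
          exact pow_lt_pow_left₀ hv' (by rw [hR_def]; exact Real.sqrt_nonneg _) two_ne_zero
        have h3 : g v * s1 ≤ g v * ‖v‖^2 := mul_le_mul_of_nonneg_left h1.le (hg0 v)
        have heq : 2/s1 * (‖v‖^2/2 * g v) = g v * ‖v‖^2 / s1 := by
          field_simp
        rw [heq, le_div_iff₀ hs1pos]
        exact h3
      calc (∫ v in Sᶜ, g v)
          ≤ ∫ v in Sᶜ, 2/s1 * (‖v‖^2/2 * g v) :=
            setIntegral_mono_on hg_int.integrableOn
              ((hK_int.const_mul (2/s1)).integrableOn) hSmeas.compl hstep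
        _ ≤ ∫ v : Plane, 2/s1 * (‖v‖^2/2 * g v) :=
            setIntegral_le_integral (hK_int.const_mul (2/s1))
              (Filter.Eventually.of_forall fun v =>
                mul_nonneg (div_nonneg (by norm_num) hs1pos.le) (hK0 v))
        _ = 2/s1 * IK := integral_const_mul _ _
        _ = 2 * IK * t := by rw [htinv]; ring
    -- pointwise Young
    have hyoung : ∀ v : Plane, g v ≤ (ε ^ (p:ℝ))⁻¹/p * g v ^ (p:ℝ) + ε ^ (n:ℝ)/n := by
      intro v
      have h := Real.young_inequality_of_nonneg
        (mul_nonneg (hg0 v) (inv_nonneg.2 hεpos.le)) hεpos.le hpq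
      have ha : g v * ε⁻¹ * ε = g v := by field_simp
      have hb : (g v * ε⁻¹) ^ (p:ℝ) = g v ^ (p:ℝ) * (ε ^ (p:ℝ))⁻¹ := by
        rw [Real.mul_rpow (hg0 v) (inv_nonneg.2 hεpos.le), Real.inv_rpow hεpos.le]
      rw [ha, hb] at h
      calc g v ≤ g v ^ (p:ℝ) * (ε ^ (p:ℝ))⁻¹ / p + ε ^ (n:ℝ)/n := h
        _ = (ε ^ (p:ℝ))⁻¹/p * g v ^ (p:ℝ) + ε ^ (n:ℝ)/n := by ring
    -- bound for g^p
    have hgp_le : ∀ v : Plane, g v ^ (p:ℝ) ≤ (Φ (g v) + c * x₀ ^ (p:ℝ))/c := by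
      intro v
      rw [le_div_iff₀ hc]
      rcases le_or_gt x₀ (g v) with h | h
      · have h1 := hlow (g v) h
        have h2 : 0 ≤ c * x₀ ^ (p:ℝ) := mul_nonneg hc.le (Real.rpow_nonneg hx₀ _)
        linarith only [h1, h2]
      · have h2 : g v ^ (p:ℝ) ≤ x₀ ^ (p:ℝ) :=
          Real.rpow_le_rpow (hg0 v) h.le hp0.le
        have h3 : c * g v ^ (p:ℝ) ≤ c * x₀ ^ (p:ℝ) := mul_le_mul_of_nonneg_left h2 hc.le
        have h4 := hP0 v
        linarith only [h3, h4]
    have hgpm : AEStronglyMeasurable (fun v : Plane => g v ^ (p:ℝ)) volume :=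
      (Real.continuous_rpow_const hp0.le).comp_aestronglyMeasurable hgm
    have hconst_intOn : IntegrableOn (fun _ : Plane => c * x₀ ^ (p:ℝ)) S volume :=
      integrableOn_const hSfin.ne
    have hgp_intOn : IntegrableOn (fun v : Plane => g v ^ (p:ℝ)) S volume := by
      apply Integrable.mono' ((hP_int.integrableOn.add hconst_intOn).div_const c)
        hgpm.restrict
      refine Filter.Eventually.of_forall fun v => ?_
      rw [Real.norm_of_nonneg (Real.rpow_nonneg (hg0 v) _)]
      exact hgp_le v
    -- estimate of ∫_S g^p
    have hSp : (∫ v in S, g v ^ (p:ℝ)) ≤ IP/c + x₀ ^ (p:ℝ) * V := by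
      have h1 : (∫ v in S, g v ^ (p:ℝ))
          ≤ ∫ v in S, (Φ (g v) + c * x₀ ^ (p:ℝ))/c :=
        setIntegral_mono_on hgp_intOn
          ((hP_int.integrableOn.add hconst_intOn).div_const c) hSmeas
          (fun v _ => hgp_le v)
      have h2 : (∫ v in S, (Φ (g v) + c * x₀ ^ (p:ℝ))/c)
          = ((∫ v in S, Φ (g v)) + c * x₀ ^ (p:ℝ) * V)/c := by
        rw [integral_div, integral_add hP_int.integrableOn hconst_intOn,
          setIntegral_const, smul_eq_mul, hV_def, measureReal_def]
        ring_nf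
      have h3 : (∫ v in S, Φ (g v)) ≤ IP :=
        setIntegral_le_integral hP_int (Filter.Eventually.of_forall hP0)
      have h4 : ((∫ v in S, Φ (g v)) + c * x₀ ^ (p:ℝ) * V)/c
          ≤ (IP + c * x₀ ^ (p:ℝ) * V)/c := by gcongr
      have h5 : (IP + c * x₀ ^ (p:ℝ) * V)/c = IP/c + x₀ ^ (p:ℝ) * V := by
        field_simp
      calc (∫ v in S, g v ^ (p:ℝ)) ≤ _ := h1
        _ = _ := h2
        _ ≤ (IP + c * x₀ ^ (p:ℝ) * V)/c := h4
        _ = IP/c + x₀ ^ (p:ℝ) * V := h5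
    -- ball estimate via Young
    have hball : (∫ v in S, g v)
        ≤ (ε ^ (p:ℝ))⁻¹/p * (∫ v in S, g v ^ (p:ℝ)) + ε ^ (n:ℝ)/n * V := by
      have hint2 : IntegrableOn (fun _ : Plane => ε ^ (n:ℝ)/n) S volume :=
        integrableOn_const hSfin.ne
      calc (∫ v in S, g v)
          ≤ ∫ v in S, ((ε ^ (p:ℝ))⁻¹/p * g v ^ (p:ℝ) + ε ^ (n:ℝ)/n) :=
            setIntegral_mono_on hg_int.integrableOn
              ((hgp_intOn.const_mul _).add hint2) hSmeas (fun v _ => hyoung v)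
        _ = (ε ^ (p:ℝ))⁻¹/p * (∫ v in S, g v ^ (p:ℝ)) + ε ^ (n:ℝ)/n * V := by
            rw [integral_add (hgp_intOn.const_mul _) hint2, integral_const_mul,
              setIntegral_const, smul_eq_mul, hV_def, measureReal_def]
            ring
    -- closed forms
    have e2 : ε ^ (n:ℝ)/n * V = r/n := by
      rw [hεn, hV, ← hus]
      field_simp
    have e1 : (ε ^ (p:ℝ))⁻¹/p * (IP/c + x₀ ^ (p:ℝ) * V)
        = Real.pi ^ (p/n)/(p*c) * IP * t + D/p := by
      rw [hεpinv, hV, hD_def]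
      have expand : Real.pi ^ (p/n) * t/p * (IP/c + x₀ ^ (p:ℝ) * (Real.pi * s1))
          = Real.pi ^ (p/n)/(p*c) * IP * t
            + (x₀ ^ (p:ℝ) * Real.pi ^ (p/n) * Real.pi/p) * (t * s1) := by
        ring
      rw [expand, hts, mul_one]
    have h6 : (∫ v in S, g v)
        ≤ Real.pi ^ (p/n)/(p*c) * IP * t + D/p + r/n := by
      have hmul : (ε ^ (p:ℝ))⁻¹/p * (∫ v in S, g v ^ (p:ℝ))
          ≤ (ε ^ (p:ℝ))⁻¹/p * (IP/c + x₀ ^ (p:ℝ) * V) := by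
        apply mul_le_mul_of_nonneg_left hSp
        exact div_nonneg (inv_nonneg.2 (Real.rpow_nonneg hεpos.le _)) hp0.le
      have := add_le_add hmul (le_refl (ε ^ (n:ℝ)/n * V))
      rw [e1, e2] at this
      linarith only [hball, this, e2]
    have hsplit : (∫ v in S, g v) + (∫ v in Sᶜ, g v) = r := by
      rw [integral_add_compl hSmeas hg_int, hg_mass]
    have h7 : r ≤ (Real.pi ^ (p/n)/(p*c) * IP * t + D/p + r/n) + 2 * IK * t := by
      calc r = (∫ v in S, g v) + (∫ v in Sᶜ, g v) := hsplit.symm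
        _ ≤ _ := add_le_add h6 htail
    have h8 : Real.pi ^ (p/n)/(p*c) * IP * t + 2 * IK * t ≤ A0 * ((IK + IP) * t) := by
      rw [hA0_def]
      have hq : 0 ≤ Real.pi ^ (p/n)/(p*c) :=
        div_nonneg hπpn.le (mul_nonneg hp0.le hc.le)
      nlinarith only [mul_nonneg (mul_nonneg hq hIK0) htpos.le,
        mul_nonneg hIP0 htpos.le, mul_nonneg hIK0 htpos.le, htpos]
    rw [hIfun] at hcon
    have h9 : (IK + IP) * t < β/A0 * r ^ (1 + 1/n : ℝ) * t :=
      mul_lt_mul_of_pos_right hcon htpos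
    have h10 : β/A0 * r ^ (1 + 1/n : ℝ) * t = β/A0 * r := by
      rw [mul_assoc, hrpt]
    have h11 : A0 * ((IK + IP) * t) < A0 * (β/A0 * r) := by
      apply mul_lt_mul_of_pos_left _ hA0pos
      rw [← h10]
      exact h9
    have h12 : A0 * (β/A0 * r) = β * r := by
      field_simp
    have h13 : D/p ≤ β * r := by
      rw [div_le_iff₀ (mul_pos hp0 hβpos)] at hrD
      rw [div_le_iff₀ hp0]
      nlinarith only [hrD]
    have hfrac : 2*β + 1/n < 1 := by
      have h3n : (0:ℝ) < 3*n := by linarith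
      rw [← mul_lt_mul_iff_of_pos_right h3n]
      have e : (2*β + 1/n)*(3*n) = 2*(n-1) + 3 := by
        rw [hβ_def]; field_simp
      rw [e]
      linarith only [hn1]
    rw [h12] at h11
    have hfinal : r < β * r + β * r + r/n := by
      linarith only [h7, h8, h11, h13]
    have hprod : 0 < (1 - (2*β + 1/n)) * r :=
      mul_pos (by linarith only [hfrac]) hr0
    have heq2 : (1 - (2*β + 1/n)) * r = r - (β*r + β*r + r/n) := by ring
    rw [heq2] at hprod
    linarith only [hfinal, hprod]
  -- nonemptiness of the constraint set
  have hg0mem : (Metric.ball (0:Plane) 1).indicator (fun _ => r / Real.pi) ∈ Gset Φ r := by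
    have hballvol : volume (Metric.ball (0:Plane) 1) = ENNReal.ofReal Real.pi := by
      rw [EuclideanSpace.volume_ball]
      simp only [Fintype.card_fin]
      rw [show ((2:ℕ):ℝ)/2 + 1 = (2:ℝ) by norm_num, Real.Gamma_two,
        show Real.sqrt Real.pi ^ (2:ℕ) = Real.pi from Real.sq_sqrt hπ.le]
      simp [div_one]
    refine ⟨?_, ?_, ?_, ?_⟩
    · exact (integrable_indicator_iff measurableSet_ball).2
        (integrableOn_const measure_ball_lt_top.ne)
    · intro v
      exact Set.indicator_nonneg (fun _ _ => by positivity) v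
    · have hfun : (fun v : Plane => ‖v‖^2/2 *
          ((Metric.ball (0:Plane) 1).indicator (fun _ => r / Real.pi) v)
            + Φ ((Metric.ball (0:Plane) 1).indicator (fun _ => r / Real.pi) v))
          = (Metric.ball (0:Plane) 1).indicator
              (fun v => ‖v‖^2/2 * (r/Real.pi) + Φ (r/Real.pi)) := by
        funext v
        by_cases hv : v ∈ Metric.ball (0:Plane) 1
        · simp [Set.indicator_of_mem hv]
        · simp [Set.indicator_of_notMem hv, hPhi0]
      rw [hfun]
      refine (integrable_indicator_iff measurableSet_ball).2 ?_
      have hcont : Continuous (fun v : Plane => ‖v‖^2/2 * (r/Real.pi) + Φ (r/Real.pi)) :=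
        (((continuous_norm.pow 2).div_const 2).mul continuous_const).add continuous_const
      exact (hcont.locallyIntegrable.integrableOn_isCompact
        (isCompact_closedBall (0:Plane) 1)).mono_set Metric.ball_subset_closedBall
    · rw [integral_indicator_const _ measurableSet_ball, measureReal_def, hballvol,
        ENNReal.toReal_ofReal hπ.le, smul_eq_mul]
      field_simp
  have hne : (Ifun Φ '' Gset Φ r).Nonempty :=
    ⟨_, Set.mem_image_of_mem _ hg0mem⟩
  refine le_csInf hne ?_
  rintro y ⟨g, hg, rfl⟩
  exact hmain g hg
end
end

section
/- Let k ∈ (0,1), n = k+1, Φ strictly convex C¹ with Φ(0) = Φ'(0) = 0 and Φ(x) ≥ c x^{1+1/k} for large x, and ρ_ext ∈ L¹₊ ∩ L^{4/3}(ℝ²). For every f ∈ F_M the spatial density ρ_f belongs to F_M^r and E_C(f) ≥ E_C^r(ρ_f); moreover, if f minimizes E_C over F_M then E_C(f) = E_C^r(ρ_f). -/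
open MeasureTheory Filter Real Set
open scoped Topology ENNReal NNReal RealInnerProductSpace

noncomputable section

section Aux

variable {Φ : ℝ → ℝ}

lemma energy_nonneg (hPhiNonneg : ∀ x : ℝ, 0 ≤ x → 0 ≤ Φ x) {g : Plane → ℝ}
    (hg : ∀ v, 0 ≤ g v) (v : Plane) : 0 ≤ (‖v‖ ^ 2 / 2) * g v + Φ (g v) := by
  have h1 := hPhiNonneg _ (hg v)
  have h2 := hg v
  positivity

lemma Ifun_nonneg (hPhiNonneg : ∀ x : ℝ, 0 ≤ x → 0 ≤ Φ x) {g : Plane → ℝ}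
    (hg : ∀ v, 0 ≤ g v) : 0 ≤ Ifun Φ g :=
  integral_nonneg (energy_nonneg hPhiNonneg hg)

lemma bddBelow_IfunGset (hPhiNonneg : ∀ x : ℝ, 0 ≤ x → 0 ≤ Φ x) (r : ℝ) :
    BddBelow (Ifun Φ '' Gset Φ r) := by
  refine ⟨0, ?_⟩
  rintro y ⟨g, hg, rfl⟩
  exact Ifun_nonneg hPhiNonneg hg.2.1

lemma Psi_nonneg (hPhiNonneg : ∀ x : ℝ, 0 ≤ x → 0 ≤ Φ x) (r : ℝ) : 0 ≤ Psi Φ r :=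
  Real.sInf_nonneg (by rintro y ⟨g, hg, rfl⟩; exact Ifun_nonneg hPhiNonneg hg.2.1)

lemma Psi_le_Ifun (hPhiNonneg : ∀ x : ℝ, 0 ≤ x → 0 ≤ Φ x) {r : ℝ} {g : Plane → ℝ}
    (hg : g ∈ Gset Φ r) : Psi Φ r ≤ Ifun Φ g :=
  csInf_le (bddBelow_IfunGset hPhiNonneg r) (Set.mem_image_of_mem _ hg)

lemma zero_mem_Gset (hPhi0 : Φ 0 = 0) : (fun _ : Plane => (0:ℝ)) ∈ Gset Φ 0 := by
  refine ⟨integrable_zero _ _ _, fun v => le_rfl, ?_, by simp⟩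
  simpa [hPhi0] using (integrable_zero Plane ℝ (volume : Measure Plane))

lemma Ifun_zero (hPhi0 : Φ 0 = 0) : Ifun Φ (fun _ : Plane => (0:ℝ)) = 0 := by
  simp [Ifun, hPhi0]

lemma Gset_nonempty (hPhi0 : Φ 0 = 0) {r : ℝ} (hr : 0 ≤ r) : (Gset Φ r).Nonempty := by
  rcases eq_or_lt_of_le hr with h | hrpos
  · exact ⟨_, h ▸ zero_mem_Gset hPhi0⟩
  set s : Set Plane := Metric.closedBall 0 1 with hs
  have hsm : MeasurableSet s := measurableSet_closedBall
  have hV0 : 0 < (volume s).toReal := by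
    refine ENNReal.toReal_pos (Metric.measure_closedBall_pos volume (0:Plane) one_pos).ne' ?_
    exact (MeasureTheory.measure_closedBall_lt_top).ne
  set C : ℝ := r / (volume s).toReal with hC
  have hC0 : 0 ≤ C := div_nonneg hrpos.le hV0.le
  refine ⟨s.indicator (fun _ => C), ?_, ?_, ?_, ?_⟩
  · rw [integrable_indicator_iff hsm]
    exact integrableOn_const MeasureTheory.measure_closedBall_lt_top.ne
  · intro v; exact Set.indicator_nonneg (fun _ _ => hC0) v
  · have : (fun v : Plane => (‖v‖ ^ 2 / 2) * s.indicator (fun _ => C) v + Φ (s.indicator (fun _ => C) v))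
        = s.indicator (fun v => (‖v‖ ^ 2 / 2) * C + Φ C) := by
      ext v
      by_cases hv : v ∈ s <;> simp [Set.indicator_of_mem, Set.indicator_of_notMem, hv, hPhi0]
    rw [this, integrable_indicator_iff hsm]
    exact (Continuous.continuousOn (by fun_prop)).integrableOn_compact (isCompact_closedBall _ _)
  · rw [integral_indicator_const _ hsm, smul_eq_mul, measureReal_def, hC, mul_div_cancel₀ _ hV0.ne']

lemma Psi_of_nonpos (hPhi0 : Φ 0 = 0) (hPhiNonneg : ∀ x : ℝ, 0 ≤ x → 0 ≤ Φ x)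
    {r : ℝ} (hr : r ≤ 0) : Psi Φ r = 0 := by
  rcases eq_or_lt_of_le hr with h | hneg
  · refine le_antisymm ?_ (Psi_nonneg hPhiNonneg r)
    subst h
    have := Psi_le_Ifun hPhiNonneg (zero_mem_Gset hPhi0)
    rwa [Ifun_zero hPhi0] at this
  · have : Gset Φ r = ∅ := by
      ext g
      simp only [Gset, Set.mem_setOf_eq, Set.mem_empty_iff_false, iff_false]
      rintro ⟨hint, hpos, -, hmass⟩
      have : 0 ≤ r := hmass ▸ integral_nonneg hpos
      exact absurd (this.trans_lt hneg) (lt_irrefl 0)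
    rw [Psi, this, Set.image_empty, Real.sInf_empty]

end Aux

section Aux2

variable {Φ : ℝ → ℝ}

lemma phi_mul_le (hPhiConv : StrictConvexOn ℝ (Set.Ici 0) Φ) (hPhi0 : Φ 0 = 0)
    {t y : ℝ} (ht0 : 0 ≤ t) (ht1 : t ≤ 1) (hy : 0 ≤ y) : Φ (t * y) ≤ t * Φ y := by
  have h := hPhiConv.convexOn.2 (Set.mem_Ici.2 hy) (Set.mem_Ici.2 le_rfl)
    ht0 (by linarith : (0:ℝ) ≤ 1 - t) (by ring)
  simpa [hPhi0] using h

/-- `Φ (max y 0)` is continuous if `Φ` is continuous on `[0, ∞)`. -/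
lemma continuous_phiMax (hPhiC1 : ContDiffOn ℝ 1 Φ (Set.Ici 0)) :
    Continuous (fun y : ℝ => Φ (max y 0)) :=
  hPhiC1.continuousOn.comp_continuous (continuous_id.max continuous_const)
    (fun x => Set.mem_Ici.2 (le_max_right _ _))

lemma phiMax_eq {y : ℝ} (hy : 0 ≤ y) : Φ (max y 0) = Φ y := by rw [max_eq_left hy]

/-- a.e.-strong measurability of `Φ ∘ g` for nonneg a.e.-strongly measurable `g`. -/
lemma aesm_phi_comp (hPhiC1 : ContDiffOn ℝ 1 Φ (Set.Ici 0)) {α : Type*} [MeasurableSpace α]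
    {μ : Measure α} {g : α → ℝ} (hm : AEStronglyMeasurable g μ) (hg : ∀ v, 0 ≤ g v) :
    AEStronglyMeasurable (fun v => Φ (g v)) μ := by
  have : (fun v => Φ (g v)) = (fun y : ℝ => Φ (max y 0)) ∘ g := by
    ext v; simp [phiMax_eq (hg v)]
  rw [this]
  exact (continuous_phiMax hPhiC1).comp_aestronglyMeasurable hm

lemma smul_mem_Gset (hPhiConv : StrictConvexOn ℝ (Set.Ici 0) Φ) (hPhi0 : Φ 0 = 0)
    (hPhiNonneg : ∀ x : ℝ, 0 ≤ x → 0 ≤ Φ x) (hPhiC1 : ContDiffOn ℝ 1 Φ (Set.Ici 0))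
    {g : Plane → ℝ} {r : ℝ} (hg : g ∈ Gset Φ r) {t : ℝ} (ht0 : 0 ≤ t) (ht1 : t ≤ 1) :
    (fun v => t * g v) ∈ Gset Φ (t * r) ∧ Ifun Φ (fun v => t * g v) ≤ t * Ifun Φ g := by
  obtain ⟨hint, hpos, hen, hmass⟩ := hg
  have hpos' : ∀ v, 0 ≤ t * g v := fun v => mul_nonneg ht0 (hpos v)
  have hptwise : ∀ v : Plane, (‖v‖ ^ 2 / 2) * (t * g v) + Φ (t * g v)
      ≤ t * ((‖v‖ ^ 2 / 2) * g v + Φ (g v)) := by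
    intro v
    have := phi_mul_le hPhiConv hPhi0 ht0 ht1 (hpos v)
    nlinarith [sq_nonneg ‖v‖, hpos v]
  have haesm : AEStronglyMeasurable (fun v : Plane => (‖v‖ ^ 2 / 2) * (t * g v) + Φ (t * g v)) volume := by
    refine AEStronglyMeasurable.add ?_ (aesm_phi_comp hPhiC1 (hint.aestronglyMeasurable.const_mul t) hpos')
    exact ((continuous_norm.pow 2).div_const 2).aestronglyMeasurable.mul
      (hint.aestronglyMeasurable.const_mul t)
  have henergy : Integrable (fun v : Plane => (‖v‖ ^ 2 / 2) * (t * g v) + Φ (t * g v)) := by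
    refine Integrable.mono' hen haesm (Filter.Eventually.of_forall fun v => ?_)
    rw [Real.norm_of_nonneg (energy_nonneg hPhiNonneg hpos' v)]
    calc (‖v‖ ^ 2 / 2) * (t * g v) + Φ (t * g v) ≤ t * ((‖v‖ ^ 2 / 2) * g v + Φ (g v)) := hptwise v
    _ ≤ 1 * ((‖v‖ ^ 2 / 2) * g v + Φ (g v)) := by
        have := energy_nonneg hPhiNonneg hpos v
        nlinarith
    _ = _ := one_mul _
  refine ⟨⟨hint.const_mul t, hpos', henergy, by rw [integral_const_mul, hmass]⟩, ?_⟩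
  calc Ifun Φ (fun v => t * g v) ≤ ∫ v : Plane, t * ((‖v‖ ^ 2 / 2) * g v + Φ (g v)) :=
        integral_mono henergy (hen.const_mul t) hptwise
  _ = t * Ifun Φ g := integral_const_mul t _

lemma Psi_mono (hPhiConv : StrictConvexOn ℝ (Set.Ici 0) Φ) (hPhi0 : Φ 0 = 0)
    (hPhiNonneg : ∀ x : ℝ, 0 ≤ x → 0 ≤ Φ x) (hPhiC1 : ContDiffOn ℝ 1 Φ (Set.Ici 0)) :
    Monotone (Psi Φ) := by
  intro a b hab
  rcases le_or_gt a 0 with ha | ha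
  · rw [Psi_of_nonpos hPhi0 hPhiNonneg ha]
    rcases le_or_gt b 0 with hb | hb
    · rw [Psi_of_nonpos hPhi0 hPhiNonneg hb]
    · exact Psi_nonneg hPhiNonneg b
  · have hb : 0 < b := ha.trans_le hab
    refine le_csInf ((Gset_nonempty hPhi0 hb.le).image _) ?_
    rintro y ⟨g, hg, rfl⟩
    set t : ℝ := a / b with htdef
    have ht0 : 0 ≤ t := div_nonneg ha.le hb.le
    have ht1 : t ≤ 1 := div_le_one_of_le₀ hab hb.le
    obtain ⟨hmem, hle⟩ := smul_mem_Gset hPhiConv hPhi0 hPhiNonneg hPhiC1 hg ht0 ht1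
    have hta : t * b = a := div_mul_cancel₀ a hb.ne'
    calc Psi Φ a = Psi Φ (t * b) := by rw [hta]
    _ ≤ Ifun Φ (fun v => t * g v) := Psi_le_Ifun hPhiNonneg hmem
    _ ≤ t * Ifun Φ g := hle
    _ ≤ 1 * Ifun Φ g := by
        have := Ifun_nonneg hPhiNonneg hg.2.1
        nlinarith
    _ = Ifun Φ g := one_mul _

lemma Psi_measurable (hPhiConv : StrictConvexOn ℝ (Set.Ici 0) Φ) (hPhi0 : Φ 0 = 0)
    (hPhiNonneg : ∀ x : ℝ, 0 ≤ x → 0 ≤ Φ x) (hPhiC1 : ContDiffOn ℝ 1 Φ (Set.Ici 0)) :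
    Measurable (Psi Φ) :=
  (Psi_mono hPhiConv hPhi0 hPhiNonneg hPhiC1).measurable

end Aux2

section Aux3

variable {Φ : ℝ → ℝ}

lemma slice_props (hPhiConv : StrictConvexOn ℝ (Set.Ici 0) Φ) (hPhi0 : Φ 0 = 0)
    (hPhiNonneg : ∀ x : ℝ, 0 ≤ x → 0 ≤ Φ x) (hPhiC1 : ContDiffOn ℝ 1 Φ (Set.Ici 0))
    {M : ℝ} {f : Phase → ℝ} (hf : f ∈ FM Φ M) :
    Integrable (spatialDensity f) ∧ (∀ x, 0 ≤ spatialDensity f x) ∧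
    (∫ x : Plane, spatialDensity f x) = M ∧
    Integrable (fun x => Psi Φ (spatialDensity f x)) ∧
    (∫ x : Plane, Psi Φ (spatialDensity f x)) ≤ Ekin f + Casimir Φ f := by
  obtain ⟨hfInt, hfpos, hfkin, hfcas, hfM⟩ := hf
  rw [show (volume : Measure Phase) = (volume : Measure Plane).prod volume from Measure.volume_eq_prod _ _]
    at hfInt hfkin hfcas
  have hρInt : Integrable (spatialDensity f) := hfInt.integral_prod_left
  have hρpos : ∀ x, 0 ≤ spatialDensity f x := fun x =>
    integral_nonneg (fun v => hfpos (x, v))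
  have hρM : (∫ x : Plane, spatialDensity f x) = M := by
    rw [← hfM, show (volume : Measure Phase) = (volume : Measure Plane).prod volume from
      Measure.volume_eq_prod _ _]
    exact (integral_prod f hfInt).symm
  -- energy function
  have heInt : Integrable (fun p : Phase => (‖p.2‖ ^ 2 / 2) * f p + Φ (f p))
      ((volume : Measure Plane).prod volume) := hfkin.add hfcas
  set h : Plane → ℝ := fun x => ∫ v : Plane, ((‖v‖ ^ 2 / 2) * f (x, v) + Φ (f (x, v))) with hhdef
  have hhInt : Integrable h := heInt.integral_prod_left
  have hae : ∀ᵐ x : Plane, Psi Φ (spatialDensity f x) ≤ h x := by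
    filter_upwards [hfInt.prod_right_ae, heInt.prod_right_ae] with x h1 h2
    exact Psi_le_Ifun hPhiNonneg ⟨h1, fun v => hfpos (x, v), h2, rfl⟩
  have haesm : AEStronglyMeasurable (fun x => Psi Φ (spatialDensity f x)) volume := by
    exact ((Psi_measurable hPhiConv hPhi0 hPhiNonneg hPhiC1).comp_aemeasurable
      hρInt.aemeasurable).aestronglyMeasurable
  have hPsiInt : Integrable (fun x => Psi Φ (spatialDensity f x)) := by
    refine Integrable.mono' hhInt haesm ?_
    filter_upwards [hae] with x hx
    rwa [Real.norm_of_nonneg (Psi_nonneg hPhiNonneg _)]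
  refine ⟨hρInt, hρpos, hρM, hPsiInt, ?_⟩
  calc (∫ x : Plane, Psi Φ (spatialDensity f x)) ≤ ∫ x, h x :=
        integral_mono_ae hPsiInt hhInt hae
  _ = ∫ p : Phase, ((‖p.2‖ ^ 2 / 2) * f p + Φ (f p)) := by
      rw [show (volume : Measure Phase) = (volume : Measure Plane).prod volume from
        Measure.volume_eq_prod _ _]
      exact (integral_prod _ heInt).symm
  _ = Ekin f + Casimir Φ f := integral_add hfkin hfcas

end Aux3

section Aux4

variable {Φ : ℝ → ℝ}

set_option maxHeartbeats 1000000 in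
lemma memLp_spatialDensity
    {k c : ℝ} (hk0 : 0 < k) (hk1 : k < 1) (hc : 0 < c)
    (hPhiNonneg : ∀ x : ℝ, 0 ≤ x → 0 ≤ Φ x)
    {x₀ : ℝ} (hx₀ : ∀ x : ℝ, x₀ ≤ x → c * x ^ (1 + 1 / k) ≤ Φ x)
    {M : ℝ} {f : Phase → ℝ} (hf : f ∈ FM Φ M) :
    MemLp (spatialDensity f) (ENNReal.ofReal (4 / 3)) volume := by
  obtain ⟨hfInt, hfpos, hfkin, hfcas, hfM⟩ := hf
  rw [show (volume : Measure Phase) = (volume : Measure Plane).prod volume from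
    Measure.volume_eq_prod _ _] at hfInt hfkin hfcas
  set ρ : Plane → ℝ := spatialDensity f with hρdef
  set κ : Plane → ℝ := fun x => ∫ v : Plane, (‖v‖ ^ 2 / 2) * f (x, v) with hκdef
  set S : Plane → ℝ := fun x => ∫ v : Plane, Φ (f (x, v)) with hSdef
  have hρInt : Integrable ρ := hfInt.integral_prod_left
  have hκInt : Integrable κ := hfkin.integral_prod_left
  have hSInt : Integrable S := hfcas.integral_prod_left
  have hρ0 : ∀ x, 0 ≤ ρ x := fun x => integral_nonneg fun v => hfpos (x, v)
  have hκ0 : ∀ x, 0 ≤ κ x := fun x => integral_nonneg fun v => by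
    have := hfpos (x, v); positivity
  have hS0 : ∀ x, 0 ≤ S x := fun x => integral_nonneg fun v => hPhiNonneg _ (hfpos (x, v))
  set x₁ : ℝ := max x₀ 1 with hx₁def
  have hx₁1 : (1:ℝ) ≤ x₁ := le_max_right _ _
  have hx₁x₀ : x₀ ≤ x₁ := le_max_left _ _
  have hx₁0 : (0:ℝ) < x₁ := lt_of_lt_of_le one_pos hx₁1
  clear_value x₁
  set V₁ : ℝ := (volume (Metric.ball (0:Plane) 1)).toReal with hV₁def
  have hV₁0 : 0 ≤ V₁ := ENNReal.toReal_nonneg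
  set D : ℝ := (x₁ * V₁ + x₁ ^ (-(1/k)) + 1) ^ ((4:ℝ)/3) with hDdef
  have hD0 : 0 ≤ D := by rw [hDdef]; positivity
  have hmain : ∀ᵐ x : Plane, ρ x ^ ((4:ℝ)/3)
      ≤ (1 + D) * ρ x + (D / c) * S x + (2 * D) * κ x := by
    filter_upwards [hfInt.prod_right_ae, hfkin.prod_right_ae, hfcas.prod_right_ae]
      with x hfx hkx hcx
    have hSx0 := hS0 x
    have hκx0 := hκ0 x
    have hSc0 : 0 ≤ S x / c := div_nonneg hSx0 hc.le
    set E : ℝ := 1 + S x / c + 2 * κ x with hE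
    have hSE : S x / c ≤ E := by rw [hE]; linarith
    have h2κE : 2 * κ x ≤ E := by rw [hE]; linarith
    have hE1 : (1:ℝ) ≤ E := by rw [hE]; linarith
    have hE0 : (0:ℝ) < E := lt_of_lt_of_le one_pos hE1
    set R : ℝ := E ^ ((1:ℝ)/8) with hRdef
    have hR0 : (0:ℝ) < R := Real.rpow_pos_of_pos hE0 _
    have hR2 : R ^ 2 = E ^ ((1:ℝ)/4) := by
      rw [hRdef, ← Real.rpow_natCast (E ^ ((1:ℝ)/8)) 2, ← Real.rpow_mul hE0.le]
      norm_num
    clear_value R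
    set A : ℝ := x₁ * E ^ (k/4) with hAdef
    have hEk4 : (1:ℝ) ≤ E ^ (k/4) := Real.one_le_rpow hE1 (by positivity)
    have hA0 : (0:ℝ) < A := by rw [hAdef]; positivity
    have hAx₁ : x₁ ≤ A := by
      rw [hAdef]; exact le_mul_of_one_le_right hx₁0.le hEk4
    have hAx₀ : x₀ ≤ A := le_trans hx₁x₀ hAx₁
    have hkk : (k/4) * ((1:ℝ)/k) = 1/4 := by field_simp
    have hA1k : A ^ ((1:ℝ)/k) = x₁ ^ ((1:ℝ)/k) * E ^ ((1:ℝ)/4) := by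
      rw [hAdef, Real.mul_rpow hx₁0.le (Real.rpow_nonneg hE0.le _),
        ← Real.rpow_mul hE0.le, hkk]
    have hA1k0 : (0:ℝ) < A ^ ((1:ℝ)/k) := Real.rpow_pos_of_pos hA0 _
    clear_value A
    -- pointwise bound in v
    have hv : ∀ v : Plane, f (x, v) ≤ (Metric.ball (0:Plane) R).indicator (fun _ => A) v
        + Φ (f (x, v)) / (c * A ^ ((1:ℝ)/k)) + (2 / R ^ 2) * ((‖v‖ ^ 2 / 2) * f (x, v)) := by
      intro v
      have hfv := hfpos (x, v)
      have h2 : 0 ≤ Φ (f (x, v)) / (c * A ^ ((1:ℝ)/k)) :=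
        div_nonneg (hPhiNonneg _ hfv) (by positivity)
      have h3 : 0 ≤ (2 / R ^ 2) * ((‖v‖ ^ 2 / 2) * f (x, v)) := by positivity
      by_cases hvR : v ∈ Metric.ball (0:Plane) R
      · rw [Set.indicator_of_mem hvR]
        rcases le_or_gt (f (x, v)) A with hfA | hfA
        · linarith
        · have hgrow := hx₀ _ (hAx₀.trans hfA.le)
          have hpow : A ^ ((1:ℝ)/k) * f (x, v) ≤ f (x, v) ^ ((1:ℝ) + 1/k) := by
            rw [Real.rpow_add (hA0.trans hfA), Real.rpow_one,
              mul_comm (f (x, v)) (f (x, v) ^ ((1:ℝ)/k))]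
            exact mul_le_mul_of_nonneg_right
              (Real.rpow_le_rpow hA0.le hfA.le (by positivity)) hfv
          have hkey : c * A ^ ((1:ℝ)/k) * f (x, v) ≤ Φ (f (x, v)) := by
            rw [mul_assoc]
            exact le_trans (mul_le_mul_of_nonneg_left hpow hc.le) hgrow
          have hfin : f (x, v) ≤ Φ (f (x, v)) / (c * A ^ ((1:ℝ)/k)) := by
            rw [le_div_iff₀ (by positivity)]
            linarith [hkey]
          linarith [hA0.le]
      · rw [Set.indicator_of_notMem hvR]
        have hnv : R ≤ ‖v‖ := by
          rw [Metric.mem_ball, dist_zero_right] at hvR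
          linarith [not_lt.1 hvR]
        have hbig : f (x, v) ≤ (2 / R ^ 2) * ((‖v‖ ^ 2 / 2) * f (x, v)) := by
          rw [show (2 / R ^ 2) * ((‖v‖ ^ 2 / 2) * f (x, v)) = (‖v‖^2 / R^2) * f (x,v) by
            field_simp]
          have hone : 1 ≤ ‖v‖^2 / R^2 := by
            rw [le_div_iff₀ (by positivity)]
            nlinarith [hnv, hR0.le, sq_nonneg (‖v‖ - R)]
          calc f (x, v) = 1 * f (x, v) := (one_mul _).symm
          _ ≤ (‖v‖^2 / R^2) * f (x,v) := mul_le_mul_of_nonneg_right hone hfv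
        linarith
    -- integrability of the three pieces
    have hballmeas : MeasurableSet (Metric.ball (0:Plane) R) := measurableSet_ball
    have i1 : Integrable ((Metric.ball (0:Plane) R).indicator (fun _ => A)) := by
      rw [integrable_indicator_iff hballmeas]
      exact integrableOn_const measure_ball_lt_top.ne
    have i2 : Integrable (fun v : Plane => Φ (f (x, v)) / (c * A ^ ((1:ℝ)/k))) :=
      hcx.div_const _
    have i3 : Integrable (fun v : Plane => (2 / R ^ 2) * ((‖v‖ ^ 2 / 2) * f (x, v))) :=
      hkx.const_mul _
    have hvol : (volume (Metric.ball (0:Plane) R)).toReal = R ^ 2 * V₁ := by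
      rw [Measure.addHaar_ball _ _ hR0.le, ENNReal.toReal_mul, ENNReal.toReal_ofReal (by positivity)]
      rw [hV₁def]
      congr 2
      exact finrank_euclideanSpace_fin
    have hρle : ρ x ≤ A * (R ^ 2 * V₁) + S x / (c * A ^ ((1:ℝ)/k)) + (2 / R ^ 2) * κ x := by
      have i23 : Integrable (fun v : Plane => Φ (f (x, v)) / (c * A ^ ((1:ℝ)/k))
          + (2 / R ^ 2) * ((‖v‖ ^ 2 / 2) * f (x, v))) := i2.add i3
      have itot : Integrable (fun v : Plane => (Metric.ball (0:Plane) R).indicator (fun _ => A) v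
          + (Φ (f (x, v)) / (c * A ^ ((1:ℝ)/k)) + (2 / R ^ 2) * ((‖v‖ ^ 2 / 2) * f (x, v)))) :=
        i1.add i23
      have hmono := integral_mono hfx itot (fun v => by simpa [add_assoc] using hv v)
      rw [integral_add i1 i23, integral_add i2 i3, integral_indicator_const _ hballmeas,
        integral_div, integral_const_mul, measureReal_def, hvol, smul_eq_mul] at hmono
      have hκx : (∫ v : Plane, ‖v‖ ^ 2 / 2 * f (x, v)) = κ x := by rw [hκdef]
      have hSx : (∫ v : Plane, Φ (f (x, v))) = S x := by rw [hSdef]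
      have hρx : (∫ v : Plane, f (x, v)) = ρ x := by rw [hρdef]; rfl
      rw [hκx, hSx, hρx] at hmono
      linarith [hmono]
    -- bound the three terms by powers of E
    have e34 : E ^ ((3:ℝ)/4) * E ^ ((1:ℝ)/4) = E := by
      rw [← Real.rpow_add hE0]; norm_num
    have hE340 : 0 ≤ E ^ ((3:ℝ)/4) := Real.rpow_nonneg hE0.le _
    have t1 : A * (R ^ 2 * V₁) ≤ (x₁ * V₁) * E ^ ((3:ℝ)/4) := by
      rw [hR2, hAdef]
      have hsplit : E ^ (k/4) * E ^ ((1:ℝ)/4) = E ^ (k/4 + 1/4) := (Real.rpow_add hE0 _ _).symm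
      calc x₁ * E ^ (k/4) * (E ^ ((1:ℝ)/4) * V₁) = (x₁ * V₁) * (E ^ (k/4 + 1/4)) := by
            rw [← hsplit]; ring
      _ ≤ (x₁ * V₁) * E ^ ((3:ℝ)/4) := by
          refine mul_le_mul_of_nonneg_left ?_ (by positivity)
          exact Real.rpow_le_rpow_of_exponent_le hE1 (by linarith)
    have t2 : S x / (c * A ^ ((1:ℝ)/k)) ≤ x₁ ^ (-(1/k)) * E ^ ((3:ℝ)/4) := by
      rw [hA1k, div_le_iff₀ (by positivity)]
      have hx₁id : x₁ ^ (-(1/k)) * x₁ ^ ((1:ℝ)/k) = 1 := by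
        rw [← Real.rpow_add hx₁0]; norm_num
      calc S x ≤ c * E := by
            rw [div_le_iff₀ hc] at hSE; linarith [hSE]
      _ = x₁ ^ (-(1/k)) * E ^ ((3:ℝ)/4) * (c * (x₁ ^ ((1:ℝ)/k) * E ^ ((1:ℝ)/4))) := by
          calc c * E = (x₁ ^ (-(1/k)) * x₁ ^ ((1:ℝ)/k)) * (E ^ ((3:ℝ)/4) * E ^ ((1:ℝ)/4)) * c := by
                rw [hx₁id, e34]; ring
          _ = _ := by ring
    have t3 : (2 / R ^ 2) * κ x ≤ E ^ ((3:ℝ)/4) := by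
      rw [hR2, div_mul_eq_mul_div, div_le_iff₀ (by positivity)]
      calc 2 * κ x ≤ E := h2κE
      _ = E ^ ((3:ℝ)/4) * E ^ ((1:ℝ)/4) := e34.symm
    have hρleE : ρ x ≤ (x₁ * V₁ + x₁ ^ (-(1/k)) + 1) * E ^ ((3:ℝ)/4) := by
      have hexp : (x₁ * V₁ + x₁ ^ (-(1/k)) + 1) * E ^ ((3:ℝ)/4)
          = (x₁ * V₁) * E ^ ((3:ℝ)/4) + x₁ ^ (-(1/k)) * E ^ ((3:ℝ)/4) + E ^ ((3:ℝ)/4) := by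
        ring
      rw [hexp]
      linarith [t1, t2, t3, hρle]
    have hC0 : (0:ℝ) ≤ x₁ * V₁ + x₁ ^ (-(1/k)) + 1 := by positivity
    have hfinal : ρ x ^ ((4:ℝ)/3) ≤ D * E := by
      calc ρ x ^ ((4:ℝ)/3) ≤ ((x₁ * V₁ + x₁ ^ (-(1/k)) + 1) * E ^ ((3:ℝ)/4)) ^ ((4:ℝ)/3) :=
            Real.rpow_le_rpow (hρ0 x) hρleE (by norm_num)
      _ = D * (E ^ ((3:ℝ)/4)) ^ ((4:ℝ)/3) := by
          rw [Real.mul_rpow hC0 hE340, hDdef]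
      _ = D * E := by
          rw [← Real.rpow_mul hE0.le]
          norm_num
    rcases le_or_gt (ρ x) 1 with h1 | h1
    · have hle : ρ x ^ ((4:ℝ)/3) ≤ ρ x := by
        rcases eq_or_lt_of_le (hρ0 x) with h0 | h0
        · rw [← h0, Real.zero_rpow (by norm_num)]
        · calc ρ x ^ ((4:ℝ)/3) ≤ ρ x ^ (1:ℝ) :=
              Real.rpow_le_rpow_of_exponent_ge h0 h1 (by norm_num)
          _ = ρ x := Real.rpow_one _
      have o1 : 0 ≤ (D / c) * S x := by positivity
      have o2 : 0 ≤ (2 * D) * κ x := by positivity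
      have o3 : 0 ≤ D * ρ x := mul_nonneg hD0 (hρ0 x)
      nlinarith
    · have hDE : D * E = D + (D / c) * S x + (2 * D) * κ x := by
        rw [hE]; field_simp
      have o4 : D * 1 ≤ D * ρ x := mul_le_mul_of_nonneg_left h1.le hD0
      nlinarith
  -- conclude Memℒp
  have hmaj : Integrable (fun x => (1 + D) * ρ x + (D / c) * S x + (2 * D) * κ x) :=
    ((hρInt.const_mul _).add (hSInt.const_mul _)).add (hκInt.const_mul _)
  have haesm : AEStronglyMeasurable (fun x => ρ x ^ ((4:ℝ)/3)) (volume : Measure Plane) :=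
    (Real.continuous_rpow_const (by norm_num)).comp_aestronglyMeasurable
      hρInt.aestronglyMeasurable
  have hInt43 : Integrable (fun x => ρ x ^ ((4:ℝ)/3)) := by
    refine Integrable.mono' hmaj haesm ?_
    filter_upwards [hmain] with x hx
    rw [Real.norm_of_nonneg (Real.rpow_nonneg (hρ0 x) _)]
    exact hx
  have hne : (ENNReal.ofReal (4/3 : ℝ)) ≠ 0 := by
    simp only [ne_eq, ENNReal.ofReal_eq_zero, not_le]; norm_num
  have hnt : (ENNReal.ofReal (4/3 : ℝ)) ≠ ⊤ := ENNReal.ofReal_ne_top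
  refine (memLp_norm_rpow_iff hρInt.aestronglyMeasurable hne hnt).1 ?_
  rw [ENNReal.div_self hne hnt, memLp_one_iff_integrable]
  have heq : (fun x => ‖ρ x‖ ^ ((ENNReal.ofReal ((4:ℝ)/3)).toReal)) = fun x => ρ x ^ ((4:ℝ)/3) := by
    funext x
    rw [ENNReal.toReal_ofReal (by norm_num : (0:ℝ) ≤ 4/3), Real.norm_of_nonneg (hρ0 x)]
  rw [show ((4:ℝ)/3 : ℝ) = (4/3 : ℝ) from rfl] at heq
  rw [heq]
  exact hInt43

end Aux4

section Aux5

variable {Φ : ℝ → ℝ}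

lemma Epot_congr_ae (ρext : Plane → ℝ) {ρ₁ ρ₂ : Plane → ℝ}
    (h : ρ₁ =ᵐ[(volume : Measure Plane)] ρ₂) : Epot ρext ρ₁ = Epot ρext ρ₂ := by
  have h1 : Epot1 ρ₁ = Epot1 ρ₂ := by
    unfold Epot1
    congr 1
    refine integral_congr_ae ?_
    filter_upwards [h] with x hx
    refine integral_congr_ae ?_
    filter_upwards [h] with y hy
    rw [hx, hy]
  have h2 : EpotExt ρext ρ₁ = EpotExt ρext ρ₂ := by
    unfold EpotExt
    congr 1
    refine integral_congr_ae ?_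
    filter_upwards [h] with x hx
    rw [hx]
  rw [Epot, Epot, h1, h2]

set_option maxHeartbeats 1600000 in
lemma exists_competitor
    (hPhiConv : StrictConvexOn ℝ (Set.Ici 0) Φ) (hPhi0 : Φ 0 = 0)
    (hPhiNonneg : ∀ x : ℝ, 0 ≤ x → 0 ≤ Φ x) (hPhiC1 : ContDiffOn ℝ 1 Φ (Set.Ici 0))
    {M : ℝ} {f : Phase → ℝ} (hf : f ∈ FM Φ M) {η : ℝ} (hη : 0 < η) :
    ∃ g ∈ FM Φ M, spatialDensity g =ᵐ[(volume : Measure Plane)] spatialDensity f ∧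
      Ekin g + Casimir Φ g ≤ (∫ x : Plane, Psi Φ (spatialDensity f x)) + η := by
  obtain ⟨hρInt, hρpos, hρM, hPsiInt, -⟩ :=
    slice_props hPhiConv hPhi0 hPhiNonneg hPhiC1 hf
  have hM0 : 0 ≤ M := hρM ▸ integral_nonneg hρpos
  set ρ : Plane → ℝ := spatialDensity f with hρdef
  set P : ℝ := ∫ x : Plane, Psi Φ (ρ x) with hPdef
  have hP0 : 0 ≤ P := integral_nonneg fun x => Psi_nonneg hPhiNonneg _
  -- parameters
  set δ : ℝ := min 1 (η / (6 * (P + 1))) with hδdef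
  have hδ0 : 0 < δ := lt_min one_pos (by positivity)
  have hδ1 : δ ≤ 1 := min_le_left _ _
  have hδP : 3 * δ * P ≤ η / 2 := by
    have h1 : δ ≤ η / (6 * (P + 1)) := min_le_right _ _
    rw [le_div_iff₀ (by positivity)] at h1
    nlinarith
  set ε : ℝ := η / (8 * (M + 1)) with hεdef
  have hε0 : 0 < ε := by positivity
  have hεM : ε * M ≤ η / 8 := by
    rw [hεdef, div_mul_eq_mul_div, div_le_div_iff₀ (by positivity) (by norm_num)]
    nlinarith
  have hb1 : (1:ℝ) < 1 + δ := by linarith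
  have hb0 : (0:ℝ) < 1 + δ := by linarith
  clear_value δ ε
  -- dyadic mass grid
  set r : ℤ → ℝ := fun j => (1 + δ) ^ j with hrdef
  have hr0 : ∀ j, 0 < r j := fun j => zpow_pos hb0 j
  -- near-optimal profiles at each grid mass
  have hHex : ∀ j : ℤ, ∃ h, h ∈ Gset Φ (r j) ∧ Ifun Φ h ≤ Psi Φ (r j) + ε * min 1 (r j) := by
    intro j
    have hmin0 : 0 < ε * min 1 (r j) := mul_pos hε0 (lt_min one_pos (hr0 j))
    have hlt : Psi Φ (r j) < Psi Φ (r j) + ε * min 1 (r j) := by linarith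
    obtain ⟨y, hy_mem, hy_lt⟩ :=
      exists_lt_of_csInf_lt ((Gset_nonempty hPhi0 (hr0 j).le).image _) hlt
    obtain ⟨h, hmem, rfl⟩ := hy_mem
    exact ⟨h, hmem, hy_lt.le⟩
  choose h0 hh0mem hh0le using hHex
  -- measurable nonnegative versions
  have hmk : ∀ j : ℤ, ∃ H : Plane → ℝ, Measurable H ∧ (∀ v, 0 ≤ H v) ∧
      H =ᵐ[(volume : Measure Plane)] h0 j := by
    intro j
    have hsm := (hh0mem j).1.aestronglyMeasurable
    refine ⟨fun v => max (hsm.mk _ v) 0,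
      hsm.stronglyMeasurable_mk.measurable.max measurable_const,
      fun v => le_max_right _ _, ?_⟩
    filter_upwards [hsm.ae_eq_mk] with v hv
    rw [← hv]
    exact max_eq_left ((hh0mem j).2.1 v)
  choose H hHmeas hHpos hHae using hmk
  have hHmem : ∀ j, H j ∈ Gset Φ (r j) := by
    intro j
    obtain ⟨hint, hpos, hen, hmass⟩ := hh0mem j
    refine ⟨hint.congr (hHae j).symm, hHpos j, ?_, ?_⟩
    · refine hen.congr ?_
      filter_upwards [hHae j] with v hv
      rw [hv]
    · rw [integral_congr_ae (hHae j), hmass]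
  have hHle : ∀ j, Ifun Φ (H j) ≤ Psi Φ (r j) + ε * min 1 (r j) := by
    intro j
    have heq : Ifun Φ (H j) = Ifun Φ (h0 j) := by
      refine integral_congr_ae ?_
      filter_upwards [hHae j] with v hv
      rw [hv]
    rw [heq]; exact hh0le j
  -- split the energies of H j
  have hHkin : ∀ j, Integrable (fun v : Plane => (‖v‖ ^ 2 / 2) * H j v) := by
    intro j
    have hen := (hHmem j).2.2.1
    have haesm : AEStronglyMeasurable (fun v : Plane => (‖v‖ ^ 2 / 2) * H j v)
        (volume : Measure Plane) :=
      (((continuous_norm.pow 2).div_const 2).aestronglyMeasurable).mul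
        (hHmeas j).aestronglyMeasurable
    refine hen.mono' haesm (Filter.Eventually.of_forall fun v => ?_)
    have h1 : 0 ≤ (‖v‖ ^ 2 / 2) * H j v := by
      have := hHpos j v; positivity
    rw [Real.norm_of_nonneg h1]
    have := hPhiNonneg _ (hHpos j v)
    linarith
  have hHcas : ∀ j, Integrable (fun v : Plane => Φ (H j v)) := by
    intro j
    have hsub := ((hHmem j).2.2.1).sub (hHkin j)
    exact hsub.congr (Filter.Eventually.of_forall fun v => by simp only [Pi.sub_apply]; ring)
  set K : ℤ → ℝ := fun j => ∫ v : Plane, (‖v‖ ^ 2 / 2) * H j v with hKdef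
  set CC : ℤ → ℝ := fun j => ∫ v : Plane, Φ (H j v) with hCdef
  have hK0 : ∀ j, 0 ≤ K j := fun j => integral_nonneg fun v => by
    have := hHpos j v; positivity
  have hC0 : ∀ j, 0 ≤ CC j := fun j => integral_nonneg fun v => hPhiNonneg _ (hHpos j v)
  have hKC : ∀ j, K j + CC j = Ifun Φ (H j) := fun j =>
    (integral_add (hHkin j) (hHcas j)).symm
  -- measurable version of ρ
  have hρaesm := hρInt.aestronglyMeasurable
  set ρm : Plane → ℝ := fun x => max (hρaesm.mk ρ x) 0 with hρmdef
  have hρmmeas : Measurable ρm :=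
    hρaesm.stronglyMeasurable_mk.measurable.max measurable_const
  have hρmae : ρm =ᵐ[(volume : Measure Plane)] ρ := by
    filter_upwards [hρaesm.ae_eq_mk] with x hx
    rw [hρmdef]
    dsimp only
    rw [← hx]
    exact max_eq_left (hρpos x)
  have hρm0 : ∀ x, 0 ≤ ρm x := fun x => le_max_right _ _
  have hρmInt : Integrable ρm := hρInt.congr hρmae.symm
  have hρmM : (∫ x : Plane, ρm x) = M := by rw [integral_congr_ae hρmae, hρM]
  have hPsiρmInt : Integrable (fun x => Psi Φ (ρm x)) := by
    refine hPsiInt.congr ?_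
    filter_upwards [hρmae] with x hx
    rw [hx]
  have hPsiρmP : (∫ x : Plane, Psi Φ (ρm x)) = P := by
    rw [hPdef]
    refine integral_congr_ae ?_
    filter_upwards [hρmae] with x hx
    rw [hx]
  clear_value ρm
  -- index and scaling functions
  set N : Plane → ℤ := fun x => ⌊Real.logb (1 + δ) (ρm x)⌋ with hNdef
  have hNmeas : Measurable N := by
    refine Int.measurable_floor.comp ?_
    have hrepr : (fun x => Real.logb (1 + δ) (ρm x))
        = fun x => Real.log (ρm x) / Real.log (1 + δ) := rfl
    rw [hrepr]
    exact (Real.measurable_log.comp hρmmeas).div_const _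
  set sc : Plane → ℝ := fun x => Real.sqrt (r (N x) / ρm x) with hscdef
  have hrNmeas : Measurable (fun x => r (N x)) := measurable_from_top.comp hNmeas
  have hscmeas : Measurable sc :=
    Real.continuous_sqrt.measurable.comp (hrNmeas.div hρmmeas)
  have hscfacts : ∀ x, 0 < ρm x → r (N x) ≤ ρm x ∧ ρm x ≤ (1 + δ) * r (N x)
      ∧ 0 < sc x ∧ sc x ≤ 1 ∧ sc x ^ 2 = r (N x) / ρm x := by
    intro x hx
    have hle : r (N x) ≤ ρm x := by
      have h1 : ((N x : ℝ)) ≤ Real.logb (1 + δ) (ρm x) := Int.floor_le _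
      calc r (N x) = (1 + δ) ^ ((N x : ℝ)) := (Real.rpow_intCast _ _).symm
      _ ≤ (1 + δ) ^ Real.logb (1 + δ) (ρm x) := Real.rpow_le_rpow_of_exponent_le hb1.le h1
      _ = ρm x := Real.rpow_logb hb0 hb1.ne' hx
    have hlt : ρm x ≤ (1 + δ) * r (N x) := by
      have h1 : Real.logb (1 + δ) (ρm x) < (N x : ℝ) + 1 := Int.lt_floor_add_one _
      have h2 : ρm x < (1 + δ) ^ ((N x : ℝ) + 1) := by
        conv_lhs => rw [← Real.rpow_logb hb0 hb1.ne' hx]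
        exact Real.rpow_lt_rpow_of_exponent_lt hb1 h1
      calc ρm x ≤ (1 + δ) ^ ((N x : ℝ) + 1) := h2.le
      _ = (1 + δ) * r (N x) := by
          rw [Real.rpow_add hb0, Real.rpow_one, Real.rpow_intCast]
          ring
    have hsc2 : sc x ^ 2 = r (N x) / ρm x :=
      Real.sq_sqrt (div_nonneg (hr0 _).le hx.le)
    have hsc0 : 0 < sc x := Real.sqrt_pos.2 (div_pos (hr0 _) hx)
    have hsc1 : sc x ≤ 1 := by
      rw [hscdef]
      dsimp only
      rw [show (1:ℝ) = Real.sqrt 1 from Real.sqrt_one.symm]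
      exact Real.sqrt_le_sqrt ((div_le_one hx).2 hle)
    exact ⟨hle, hlt, hsc0, hsc1, hsc2⟩
  clear_value sc
  have hfinrank : Module.finrank ℝ Plane = 2 := finrank_euclideanSpace_fin
  have hcov : ∀ (x : Plane), 0 < sc x → ∀ (φ : Plane → ℝ),
      (∫ v : Plane, φ (sc x • v)) = (sc x ^ 2)⁻¹ * ∫ v : Plane, φ v := by
    intro x hx φ
    rw [MeasureTheory.Measure.integral_comp_smul volume φ (sc x), hfinrank, smul_eq_mul,
      abs_of_pos (by positivity)]
  -- the competitor
  set g : Phase → ℝ := fun p => if 0 < ρm p.1 then H (N p.1) (sc p.1 • p.2) else 0 with hgdef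
  have hgmeas : Measurable g := by
    have hH2 : Measurable (fun q : Plane × ℤ => H q.2 q.1) :=
      measurable_from_prod_countable_left fun j => hHmeas j
    have hm : Measurable (fun p : Phase => ((sc p.1 • p.2, N p.1) : Plane × ℤ)) :=
      ((hscmeas.comp measurable_fst).smul measurable_snd).prodMk (hNmeas.comp measurable_fst)
    have hcond : MeasurableSet {p : Phase | 0 < ρm p.1} :=
      measurableSet_lt measurable_const (hρmmeas.comp measurable_fst)
    exact Measurable.ite hcond (hH2.comp hm) measurable_const
  have hgpos : ∀ p, 0 ≤ g p := by
    intro p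
    rw [hgdef]
    dsimp only
    split_ifs with h
    · exact hHpos _ _
    · exact le_rfl
  have hslice : ∀ x, 0 < ρm x → (fun v => g (x, v)) = fun v => H (N x) (sc x • v) := by
    intro x hx
    funext v
    simp only [hgdef, if_pos hx]
  have hslice0 : ∀ x, ¬ 0 < ρm x → (fun v => g (x, v)) = fun _ => (0:ℝ) := by
    intro x hx
    funext v
    simp only [hgdef, if_neg hx]
  -- slice mass
  have hmass_slice : ∀ x, (∫ v : Plane, g (x, v)) = ρm x := by
    intro x
    by_cases hx : 0 < ρm x
    · obtain ⟨hle, hlt, hsc0, hsc1, hsc2⟩ := hscfacts x hx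
      rw [show (fun v => g (x, v)) = fun v => H (N x) (sc x • v) from hslice x hx]
      rw [hcov x hsc0 (H (N x)), (hHmem (N x)).2.2.2, hsc2, inv_div]
      exact div_mul_cancel₀ _ (hr0 _).ne'
    · rw [show (fun v => g (x, v)) = fun _ => (0:ℝ) from hslice0 x hx, integral_zero]
      exact (le_antisymm (not_lt.1 hx) (hρm0 x)).symm
  -- kinetic slice
  have hkin_slice : ∀ x, 0 < ρm x →
      Integrable (fun v : Plane => (‖v‖ ^ 2 / 2) * g (x, v)) ∧
      (∫ v : Plane, (‖v‖ ^ 2 / 2) * g (x, v)) = ((sc x ^ 2)⁻¹)^2 * K (N x) := by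
    intro x hx
    obtain ⟨hle, hlt, hsc0, hsc1, hsc2⟩ := hscfacts x hx
    have hptw : (fun v : Plane => (‖v‖ ^ 2 / 2) * g (x, v))
        = fun v => (sc x ^ 2)⁻¹ * ((fun w : Plane => (‖w‖ ^ 2 / 2) * H (N x) w) (sc x • v)) := by
      funext v
      rw [congrFun (hslice x hx) v]
      dsimp only
      rw [norm_smul, Real.norm_eq_abs, abs_of_pos hsc0]
      have hsne : sc x ≠ 0 := hsc0.ne'
      field_simp
    constructor
    · rw [hptw]
      exact ((hHkin (N x)).comp_smul hsc0.ne').const_mul _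
    · rw [hptw, integral_const_mul, hcov x hsc0 (fun w : Plane => (‖w‖ ^ 2 / 2) * H (N x) w)]
      have hKfold : (∫ v : Plane, (‖v‖ ^ 2 / 2) * H (N x) v) = K (N x) := by rw [hKdef]
      rw [hKfold]
      ring
  -- Casimir slice
  have hcas_slice : ∀ x, 0 < ρm x →
      Integrable (fun v : Plane => Φ (g (x, v))) ∧
      (∫ v : Plane, Φ (g (x, v))) = (sc x ^ 2)⁻¹ * CC (N x) := by
    intro x hx
    obtain ⟨hle, hlt, hsc0, hsc1, hsc2⟩ := hscfacts x hx
    have hptw : (fun v : Plane => Φ (g (x, v)))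
        = fun v => (fun w : Plane => Φ (H (N x) w)) (sc x • v) := by
      funext v
      rw [congrFun (hslice x hx) v]
    constructor
    · rw [hptw]
      exact (hHcas (N x)).comp_smul hsc0.ne'
    · rw [hptw, hcov x hsc0 (fun w : Plane => Φ (H (N x) w))]
  -- energy slice bound
  set maj : Plane → ℝ := fun x => (1 + δ)^2 * (Psi Φ (ρm x) + ε * ρm x) with hmajdef
  have hmajInt : Integrable maj := (hPsiρmInt.add (hρmInt.const_mul ε)).const_mul _
  have hmajval : (∫ x : Plane, maj x) = (1 + δ)^2 * (P + ε * M) := by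
    rw [hmajdef]
    rw [integral_const_mul, integral_add hPsiρmInt (hρmInt.const_mul ε), integral_const_mul,
      hPsiρmP, hρmM]
  have hIfun_slice : ∀ x, (∫ v : Plane, (‖v‖ ^ 2 / 2) * g (x, v)) + (∫ v : Plane, Φ (g (x, v)))
      ≤ maj x := by
    intro x
    by_cases hx : 0 < ρm x
    · obtain ⟨hle, hlt, hsc0, hsc1, hsc2⟩ := hscfacts x hx
      have hL1 : 1 ≤ (sc x ^ 2)⁻¹ := by
        rw [hsc2, inv_div]
        exact (one_le_div (hr0 _)).2 hle
      have hLδ : (sc x ^ 2)⁻¹ ≤ 1 + δ := by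
        rw [hsc2, inv_div]
        exact (div_le_iff₀ (hr0 _)).2 (by linarith)
      rw [(hkin_slice x hx).2, (hcas_slice x hx).2]
      have hK := hK0 (N x)
      have hC := hC0 (N x)
      have h2 : ((sc x ^ 2)⁻¹)^2 * K (N x) + (sc x ^ 2)⁻¹ * CC (N x)
          ≤ (1 + δ)^2 * (K (N x) + CC (N x)) := by
        have e1 : ((sc x ^ 2)⁻¹)^2 * K (N x) ≤ (1 + δ)^2 * K (N x) := by
          have ht2 : ((sc x ^ 2)⁻¹)^2 ≤ (1 + δ)^2 := by nlinarith
          exact mul_le_mul_of_nonneg_right ht2 hK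
        have e2 : (sc x ^ 2)⁻¹ * CC (N x) ≤ (1 + δ)^2 * CC (N x) := by
          have ht1 : (sc x ^ 2)⁻¹ ≤ (1 + δ)^2 := by nlinarith
          exact mul_le_mul_of_nonneg_right ht1 hC
        have hexp : (1 + δ)^2 * (K (N x) + CC (N x))
            = (1 + δ)^2 * K (N x) + (1 + δ)^2 * CC (N x) := by ring
        linarith
      have h3 : K (N x) + CC (N x) ≤ Psi Φ (ρm x) + ε * ρm x := by
        rw [hKC (N x)]
        calc Ifun Φ (H (N x)) ≤ Psi Φ (r (N x)) + ε * min 1 (r (N x)) := hHle (N x)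
        _ ≤ Psi Φ (ρm x) + ε * ρm x := by
            have hmono := Psi_mono hPhiConv hPhi0 hPhiNonneg hPhiC1 hle
            have hminr : min 1 (r (N x)) ≤ ρm x := le_trans (min_le_right _ _) hle
            have hmul := mul_le_mul_of_nonneg_left hminr hε0.le
            linarith
      calc ((sc x ^ 2)⁻¹)^2 * K (N x) + (sc x ^ 2)⁻¹ * CC (N x)
          ≤ (1 + δ)^2 * (K (N x) + CC (N x)) := h2
      _ ≤ (1 + δ)^2 * (Psi Φ (ρm x) + ε * ρm x) := mul_le_mul_of_nonneg_left h3 (by positivity)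
      _ = maj x := by rw [hmajdef]
    · have h0 : ρm x = 0 := le_antisymm (not_lt.1 hx) (hρm0 x)
      have e1 : (∫ v : Plane, (‖v‖ ^ 2 / 2) * g (x, v)) = 0 := by
        have heq : (fun v : Plane => (‖v‖ ^ 2 / 2) * g (x, v)) = fun _ => (0:ℝ) := by
          funext v; rw [congrFun (hslice0 x hx) v]; ring
        rw [heq, integral_zero]
      have e2 : (∫ v : Plane, Φ (g (x, v))) = 0 := by
        have heq : (fun v : Plane => Φ (g (x, v))) = fun _ => (0:ℝ) := by
          funext v; rw [congrFun (hslice0 x hx) v, hPhi0]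
        rw [heq, integral_zero]
      rw [e1, e2, hmajdef]
      dsimp only
      rw [h0, Psi_of_nonpos hPhi0 hPhiNonneg le_rfl]
      simp
  -- integrability of slices of g
  have hg_slice_int : ∀ x, Integrable (fun v => g (x, v)) := by
    intro x
    by_cases hx : 0 < ρm x
    · rw [hslice x hx]
      exact ((hHmem (N x)).1).comp_smul (hscfacts x hx).2.2.1.ne'
    · rw [hslice0 x hx]
      exact integrable_zero _ _ _
  have hkg_slice_int : ∀ x, Integrable (fun v : Plane => (‖v‖ ^ 2 / 2) * g (x, v)) := by
    intro x
    by_cases hx : 0 < ρm x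
    · exact (hkin_slice x hx).1
    · have heq : (fun v : Plane => (‖v‖ ^ 2 / 2) * g (x, v)) = fun _ => (0:ℝ) := by
        funext v; rw [congrFun (hslice0 x hx) v]; ring
      rw [heq]; exact integrable_zero _ _ _
  have hcg_slice_int : ∀ x, Integrable (fun v : Plane => Φ (g (x, v))) := by
    intro x
    by_cases hx : 0 < ρm x
    · exact (hcas_slice x hx).1
    · have heq : (fun v : Plane => Φ (g (x, v))) = fun _ => (0:ℝ) := by
        funext v; rw [congrFun (hslice0 x hx) v, hPhi0]
      rw [heq]; exact integrable_zero _ _ _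
  -- nonnegativity of slice integrals
  have hkg_nonneg : ∀ x, 0 ≤ ∫ v : Plane, (‖v‖ ^ 2 / 2) * g (x, v) := fun x =>
    integral_nonneg fun v => by have := hgpos (x, v); positivity
  have hcg_nonneg : ∀ x, 0 ≤ ∫ v : Plane, Φ (g (x, v)) := fun x =>
    integral_nonneg fun v => hPhiNonneg _ (hgpos (x, v))
  -- product integrability
  have hgaesm : AEStronglyMeasurable g ((volume : Measure Plane).prod volume) :=
    hgmeas.aestronglyMeasurable
  have hgInt : Integrable g ((volume : Measure Plane).prod volume) := by
    refine (integrable_prod_iff hgaesm).2 ⟨Filter.Eventually.of_forall hg_slice_int, ?_⟩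
    have heq : (fun x => ∫ v : Plane, ‖g (x, v)‖) = ρm := by
      funext x
      rw [← hmass_slice x]
      exact integral_congr_ae (Filter.Eventually.of_forall fun v =>
        Real.norm_of_nonneg (hgpos (x, v)))
    rw [heq]
    exact hρmInt
  have hkgaesm : AEStronglyMeasurable (fun p : Phase => (‖p.2‖ ^ 2 / 2) * g p)
      ((volume : Measure Plane).prod volume) :=
    ((((continuous_norm.comp continuous_snd).pow 2).div_const 2).aestronglyMeasurable).mul
      hgmeas.aestronglyMeasurable
  have hcgaesm : AEStronglyMeasurable (fun p : Phase => Φ (g p))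
      ((volume : Measure Plane).prod volume) := by
    have heq : (fun p : Phase => Φ (g p)) = (fun y : ℝ => Φ (max y 0)) ∘ g :=
      funext fun p => by simp [phiMax_eq (hgpos p)]
    rw [heq]
    exact (continuous_phiMax hPhiC1).comp_aestronglyMeasurable hgmeas.aestronglyMeasurable
  have hkin_le_maj : ∀ x, (∫ v : Plane, (‖v‖ ^ 2 / 2) * g (x, v)) ≤ maj x := fun x => by
    have := hIfun_slice x
    have := hcg_nonneg x
    linarith
  have hcas_le_maj : ∀ x, (∫ v : Plane, Φ (g (x, v))) ≤ maj x := fun x => by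
    have := hIfun_slice x
    have := hkg_nonneg x
    linarith
  have hkgInt : Integrable (fun p : Phase => (‖p.2‖ ^ 2 / 2) * g p)
      ((volume : Measure Plane).prod volume) := by
    refine (integrable_prod_iff hkgaesm).2 ⟨Filter.Eventually.of_forall hkg_slice_int, ?_⟩
    refine Integrable.mono' hmajInt hkgaesm.norm.integral_prod_right'
      (Filter.Eventually.of_forall fun x => ?_)
    have h0 : 0 ≤ ∫ v : Plane, ‖(‖v‖ ^ 2 / 2) * g (x, v)‖ :=
      integral_nonneg fun v => norm_nonneg _
    rw [Real.norm_of_nonneg h0]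
    have heq : (∫ v : Plane, ‖(‖v‖ ^ 2 / 2) * g (x, v)‖)
        = ∫ v : Plane, (‖v‖ ^ 2 / 2) * g (x, v) :=
      integral_congr_ae (Filter.Eventually.of_forall fun v =>
        Real.norm_of_nonneg (by have := hgpos (x, v); positivity))
    rw [heq]
    exact hkin_le_maj x
  have hcgInt : Integrable (fun p : Phase => Φ (g p))
      ((volume : Measure Plane).prod volume) := by
    refine (integrable_prod_iff hcgaesm).2 ⟨Filter.Eventually.of_forall hcg_slice_int, ?_⟩
    refine Integrable.mono' hmajInt hcgaesm.norm.integral_prod_right'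
      (Filter.Eventually.of_forall fun x => ?_)
    have h0 : 0 ≤ ∫ v : Plane, ‖Φ (g (x, v))‖ := integral_nonneg fun v => norm_nonneg _
    rw [Real.norm_of_nonneg h0]
    have heq : (∫ v : Plane, ‖Φ (g (x, v))‖) = ∫ v : Plane, Φ (g (x, v)) :=
      integral_congr_ae (Filter.Eventually.of_forall fun v =>
        Real.norm_of_nonneg (hPhiNonneg _ (hgpos (x, v))))
    rw [heq]
    exact hcas_le_maj x
  -- integrability of x-integrals
  have hkin_int_x : Integrable (fun x => ∫ v : Plane, (‖v‖ ^ 2 / 2) * g (x, v)) := by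
    refine Integrable.mono' hmajInt hkgaesm.integral_prod_right'
      (Filter.Eventually.of_forall fun x => ?_)
    rw [Real.norm_of_nonneg (hkg_nonneg x)]
    exact hkin_le_maj x
  have hcas_int_x : Integrable (fun x => ∫ v : Plane, Φ (g (x, v))) := by
    refine Integrable.mono' hmajInt hcgaesm.integral_prod_right'
      (Filter.Eventually.of_forall fun x => ?_)
    rw [Real.norm_of_nonneg (hcg_nonneg x)]
    exact hcas_le_maj x
  -- FM membership
  have hgmass : (∫ p : Phase, g p) = M := by
    rw [show (volume : Measure Phase) = (volume : Measure Plane).prod volume from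
      Measure.volume_eq_prod _ _, integral_prod _ hgInt]
    calc (∫ x : Plane, ∫ v : Plane, g (x, v))
        = ∫ x : Plane, ρm x := integral_congr_ae (Filter.Eventually.of_forall hmass_slice)
    _ = M := hρmM
  have hgFM : g ∈ FM Φ M := by
    refine ⟨?_, hgpos, ?_, ?_, hgmass⟩
    · rw [show (volume : Measure Phase) = (volume : Measure Plane).prod volume from
        Measure.volume_eq_prod _ _]
      exact hgInt
    · rw [show (volume : Measure Phase) = (volume : Measure Plane).prod volume from
        Measure.volume_eq_prod _ _]
      exact hkgInt
    · rw [show (volume : Measure Phase) = (volume : Measure Plane).prod volume from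
        Measure.volume_eq_prod _ _]
      exact hcgInt
  -- energy bound
  have hEg : Ekin g + Casimir Φ g ≤ (1 + δ)^2 * (P + ε * M) := by
    have e1 : Ekin g = ∫ x : Plane, ∫ v : Plane, (‖v‖ ^ 2 / 2) * g (x, v) := by
      rw [show Ekin g = ∫ p : Phase, (‖p.2‖ ^ 2 / 2) * g p from rfl,
        show (volume : Measure Phase) = (volume : Measure Plane).prod volume from
          Measure.volume_eq_prod _ _]
      exact integral_prod _ hkgInt
    have e2 : Casimir Φ g = ∫ x : Plane, ∫ v : Plane, Φ (g (x, v)) := by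
      rw [show Casimir Φ g = ∫ p : Phase, Φ (g p) from rfl,
        show (volume : Measure Phase) = (volume : Measure Plane).prod volume from
          Measure.volume_eq_prod _ _]
      exact integral_prod _ hcgInt
    rw [e1, e2, ← integral_add hkin_int_x hcas_int_x]
    calc (∫ x : Plane, ((∫ v : Plane, (‖v‖ ^ 2 / 2) * g (x, v)) + ∫ v : Plane, Φ (g (x, v))))
        ≤ ∫ x : Plane, maj x :=
          integral_mono (hkin_int_x.add hcas_int_x) hmajInt (fun x => hIfun_slice x)
    _ = (1 + δ)^2 * (P + ε * M) := hmajval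
  have hfinal : (1 + δ)^2 * (P + ε * M) ≤ P + η := by
    have hδδ : δ * δ ≤ δ := by nlinarith
    have hεM0 : 0 ≤ ε * M := mul_nonneg hε0.le hM0
    have hδεM : δ * (ε * M) ≤ ε * M := by nlinarith
    nlinarith
  -- conclusion
  refine ⟨g, hgFM, ?_, ?_⟩
  · have heq : spatialDensity g = ρm := funext fun x => hmass_slice x
    rw [heq]
    exact hρmae
  · calc Ekin g + Casimir Φ g ≤ (1 + δ)^2 * (P + ε * M) := hEg
    _ ≤ P + η := hfinal

end Aux5


theorem reduction_inequality
    (k M c : ℝ) (hk0 : 0 < k) (hk1 : k < 1) (hM : 0 < M) (hc : 0 < c)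
    (Φ : ℝ → ℝ)
    (hPhiConv : StrictConvexOn ℝ (Set.Ici 0) Φ)
    (hPhiC1 : ContDiffOn ℝ 1 Φ (Set.Ici 0))
    (hPhiNonneg : ∀ x : ℝ, 0 ≤ x → 0 ≤ Φ x)
    (hPhi0 : Φ 0 = 0)
    (hPhi'0 : derivWithin Φ (Set.Ici 0) 0 = 0)
    (hPhiGrowth : ∃ x₀ : ℝ, ∀ x : ℝ, x₀ ≤ x → c * x ^ (1 + 1 / k) ≤ Φ x)
    (ρext : Plane → ℝ) (hExtInt : Integrable ρext)
    (hExtPos : ∀ x, 0 ≤ ρext x)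
    (hExt43 : MemLp ρext (ENNReal.ofReal (4 / 3)) volume)
 :
    ∀ f ∈ FM Φ M,
      spatialDensity f ∈ FMr Φ M ∧
      ECr Φ ρext (spatialDensity f) ≤ EC Φ ρext f ∧
      ((∀ g ∈ FM Φ M, EC Φ ρext f ≤ EC Φ ρext g) →
        EC Φ ρext f = ECr Φ ρext (spatialDensity f)) := by
  intro f hf
  obtain ⟨hρInt, hρpos, hρM, hPsiInt, hPsiLe⟩ :=
    slice_props hPhiConv hPhi0 hPhiNonneg hPhiC1 hf
  obtain ⟨x₀, hx₀⟩ := hPhiGrowth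
  have hmem : spatialDensity f ∈ FMr Φ M :=
    ⟨hρInt, hρpos, memLp_spatialDensity hk0 hk1 hc hPhiNonneg hx₀ hf, hPsiInt, hρM⟩
  have hBle : ECr Φ ρext (spatialDensity f) ≤ EC Φ ρext f := by
    simp only [EC, ECr]
    linarith
  refine ⟨hmem, hBle, ?_⟩
  intro hmin
  refine le_antisymm ?_ hBle
  refine le_of_forall_pos_le_add fun η hη => ?_
  obtain ⟨g, hgFM, hgae, hgle⟩ :=
    exists_competitor hPhiConv hPhi0 hPhiNonneg hPhiC1 hf hη
  have hEpot : Epot ρext (spatialDensity g) = Epot ρext (spatialDensity f) :=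
    Epot_congr_ae ρext hgae
  calc EC Φ ρext f ≤ EC Φ ρext g := hmin g hgFM
  _ = Ekin g + Casimir Φ g + Epot ρext (spatialDensity f) := by
      simp only [EC, hEpot]; ring
  _ ≤ ((∫ x : Plane, Psi Φ (spatialDensity f x)) + η) + Epot ρext (spatialDensity f) := by
      linarith
  _ = ECr Φ ρext (spatialDensity f) + η := by
      simp only [ECr]; ring
end
end

section
/- Let k ∈ (0,1) and let Φ ∈ C²([0,∞)) be such that Φ(0) = Φ'(0) = 0, Φ''(x) > 0 for all x ∈ [0,∞), and Φ(x) ≥ c x^{1+1/k} for all sufficiently large x (so that Φ' and Ψ' are increasing bijections of [0,∞)). Then (Ψ')⁻¹ is continuously differentiable on [0,∞). -/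
open MeasureTheory Filter Real Set
open scoped Topology ENNReal NNReal RealInnerProductSpace

noncomputable section

/-- A strictly monotone surjective map of `ℝ` has a continuous strictly monotone two-sided
inverse. -/
lemma exists_cont_inverse (A : ℝ → ℝ) (hm : StrictMono A) (hs : Function.Surjective A) :
    ∃ q : ℝ → ℝ, Continuous q ∧ StrictMono q ∧ (∀ x, q (A x) = x) ∧ ∀ y, A (q y) = y := by
  let e := StrictMono.orderIsoOfSurjective A hm hs
  exact ⟨e.symm, e.symm.continuous, e.symm.strictMono,
    fun x => e.symm_apply_apply x, fun y => e.apply_symm_apply y⟩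

section Phi
variable {Φ : ℝ → ℝ}

/-- `Φ'` is `C¹` on `[0,∞)`. -/
lemma phi'_contDiffOn (hPhiC2 : ContDiffOn ℝ 2 Φ (Set.Ici 0)) :
    ContDiffOn ℝ 1 (derivWithin Φ (Set.Ici 0)) (Set.Ici 0) :=
  hPhiC2.derivWithin (uniqueDiffOn_Ici 0) (by norm_num)

/-- `Φ'` is strictly monotone on `[0,∞)`. -/
lemma phi'_strictMonoOn (hPhiC2 : ContDiffOn ℝ 2 Φ (Set.Ici 0))
    (hPhi'' : ∀ x ∈ Set.Ici (0 : ℝ),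
      0 < derivWithin (derivWithin Φ (Set.Ici 0)) (Set.Ici 0) x) :
    StrictMonoOn (derivWithin Φ (Set.Ici 0)) (Set.Ici 0) := by
  refine strictMonoOn_of_deriv_pos (convex_Ici 0)
    (phi'_contDiffOn hPhiC2).continuousOn (fun x hx => ?_)
  rw [interior_Ici] at hx
  have : derivWithin (derivWithin Φ (Set.Ici 0)) (Set.Ici 0) x
      = deriv (derivWithin Φ (Set.Ici 0)) x :=
    derivWithin_of_mem_nhds (Ici_mem_nhds hx)
  rw [← this]
  exact hPhi'' x (Set.mem_Ici.mpr (le_of_lt hx))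

/-- `deriv Φ = derivWithin Φ (Ici 0)` at positive points, and `Φ` has that derivative there. -/
lemma phi_hasDerivAt (hPhiC2 : ContDiffOn ℝ 2 Φ (Set.Ici 0)) {x : ℝ} (hx : 0 < x) :
    HasDerivAt Φ (derivWithin Φ (Set.Ici 0) x) x := by
  have h1 : DifferentiableWithinAt ℝ Φ (Set.Ici 0) x :=
    (hPhiC2.differentiableOn (by norm_num)) x (le_of_lt hx)
  have h2 : DifferentiableAt ℝ Φ x := h1.differentiableAt (Ici_mem_nhds hx)
  have h3 : derivWithin Φ (Set.Ici 0) x = deriv Φ x := derivWithin_of_mem_nhds (Ici_mem_nhds hx)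
  rw [h3]; exact h2.hasDerivAt

/-- The gradient inequality for the convex function `Φ`. -/
lemma phi_grad_ineq (hPhiC2 : ContDiffOn ℝ 2 Φ (Set.Ici 0))
    (hPhi'' : ∀ x ∈ Set.Ici (0 : ℝ),
      0 < derivWithin (derivWithin Φ (Set.Ici 0)) (Set.Ici 0) x)
    {a b : ℝ} (ha : 0 ≤ a) (hb : 0 ≤ b) :
    Φ a + derivWithin Φ (Set.Ici 0) a * (b - a) ≤ Φ b := by
  set P := derivWithin Φ (Set.Ici 0) with hP
  have hmono : StrictMonoOn P (Set.Ici 0) := phi'_strictMonoOn hPhiC2 hPhi''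
  have hcont : ContinuousOn Φ (Set.Ici 0) := hPhiC2.continuousOn
  rcases lt_trichotomy a b with hab | hab | hab
  · obtain ⟨ξ, hξ, hslope⟩ := exists_hasDerivAt_eq_slope Φ (fun x => P x) hab
      (hcont.mono (fun x hx => le_trans ha hx.1))
      (fun x hx => phi_hasDerivAt hPhiC2 (lt_of_le_of_lt ha hx.1))
    have hPa : P a ≤ P ξ :=
      hmono.monotoneOn ha (ha.trans hξ.1.le) hξ.1.le
    rw [eq_div_iff (sub_ne_zero.mpr hab.ne')] at hslope
    nlinarith [mul_le_mul_of_nonneg_right hPa (sub_nonneg.mpr hab.le)]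
  · simp [hab]
  · obtain ⟨ξ, hξ, hslope⟩ := exists_hasDerivAt_eq_slope Φ (fun x => P x) hab
      (hcont.mono (fun x hx => le_trans hb hx.1))
      (fun x hx => phi_hasDerivAt hPhiC2 (lt_of_le_of_lt hb hx.1))
    have hPa : P ξ ≤ P a :=
      hmono.monotoneOn (hb.trans hξ.1.le) ha hξ.2.le
    rw [eq_div_iff (sub_ne_zero.mpr hab.ne')] at hslope
    nlinarith [mul_le_mul_of_nonneg_right hPa (sub_nonneg.mpr hab.le)]

/-- `Φ'` is unbounded on `[0,∞)`. -/
lemma phi'_unbounded {k c : ℝ} (hk0 : 0 < k) (hk1 : k < 1) (hc : 0 < c)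
    (hPhiC2 : ContDiffOn ℝ 2 Φ (Set.Ici 0))
    (hPhiGrowth : ∃ x₀ : ℝ, ∀ x : ℝ, x₀ ≤ x → c * x ^ (1 + 1 / k) ≤ Φ x)
    (M : ℝ) : ∃ x, 0 ≤ x ∧ M < derivWithin Φ (Set.Ici 0) x := by
  set P := derivWithin Φ (Set.Ici 0) with hP
  by_contra h
  push_neg at h
  obtain ⟨x₀, hx₀⟩ := hPhiGrowth
  set X : ℝ := max x₀ (max 1 ((|Φ 0| + |M| + 1) / c)) with hX
  have hX1 : (1:ℝ) ≤ X := le_trans (le_max_left _ _) (le_max_right _ _)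
  have hX0 : 0 < X := lt_of_lt_of_le one_pos hX1
  have hXc : |Φ 0| + |M| + 1 ≤ c * X := by
    rw [← div_le_iff₀' hc]
    exact le_trans (le_max_right _ _) (le_max_right _ _)
  -- MVT: Φ X ≤ Φ 0 + M * X
  obtain ⟨ξ, hξ, hslope⟩ := exists_hasDerivAt_eq_slope Φ (fun x => P x) hX0
      (hPhiC2.continuousOn.mono (fun x hx => hx.1))
      (fun x hx => phi_hasDerivAt hPhiC2 hx.1)
  rw [eq_div_iff (sub_ne_zero.mpr hX0.ne')] at hslope
  have hPX : P ξ ≤ M := h ξ hξ.1.le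
  have hupper : Φ X ≤ Φ 0 + M * X := by nlinarith
  -- growth: c * X ^ 2 ≤ c * X ^ (1 + 1/k) ≤ Φ X
  have he : (2:ℝ) ≤ 1 + 1 / k := by
    have : (1:ℝ) ≤ 1 / k := (le_div_iff₀ hk0).mpr (by linarith)
    linarith
  have h2 : X ^ (2:ℝ) ≤ X ^ (1 + 1 / k) :=
    Real.rpow_le_rpow_of_exponent_le hX1 he
  have h3 : X ^ (2:ℝ) = X ^ (2:ℕ) := by
    rw [show ((2:ℝ)) = ((2:ℕ):ℝ) by norm_num, Real.rpow_natCast]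
  have hg : c * X ^ (2:ℕ) ≤ Φ X := by
    refine le_trans ?_ (hx₀ X (le_max_left _ _))
    rw [← h3]
    exact mul_le_mul_of_nonneg_left h2 hc.le
  have hc1 : Φ 0 ≤ |Φ 0| := le_abs_self _
  have hc2 : M ≤ |M| := le_abs_self _
  nlinarith [mul_le_mul_of_nonneg_right hXc hX0.le,
    mul_le_mul_of_nonneg_right hc2 hX0.le,
    mul_le_mul_of_nonneg_left hX1 (abs_nonneg (Φ 0))]

/-- Continuous increasing inverse of `Φ'`. -/
lemma exists_phi'_inv (hPhiC2 : ContDiffOn ℝ 2 Φ (Set.Ici 0))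
    (hPhi'0 : derivWithin Φ (Set.Ici 0) 0 = 0)
    (hPhi'' : ∀ x ∈ Set.Ici (0 : ℝ),
      0 < derivWithin (derivWithin Φ (Set.Ici 0)) (Set.Ici 0) x)
    (hunbdd : ∀ M : ℝ, ∃ x, 0 ≤ x ∧ M < derivWithin Φ (Set.Ici 0) x) :
    ∃ q : ℝ → ℝ, Continuous q ∧ StrictMono q ∧ q 0 = 0 ∧
      ∀ y, 0 ≤ y → 0 ≤ q y ∧ derivWithin Φ (Set.Ici 0) (q y) = y := by
  set P := derivWithin Φ (Set.Ici 0) with hP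
  have hPcont : ContinuousOn P (Set.Ici 0) := (phi'_contDiffOn hPhiC2).continuousOn
  have hPmono : StrictMonoOn P (Set.Ici 0) := phi'_strictMonoOn hPhiC2 hPhi''
  set A : ℝ → ℝ := fun x => P (max x 0) + min x 0 with hA
  have hAcont : Continuous A := by
    refine Continuous.add ?_ (continuous_id.min continuous_const)
    exact hPcont.comp_continuous (continuous_id.max continuous_const)
      (fun x => Set.mem_Ici.mpr (le_max_right _ _))
  have hA0 : A 0 = 0 := by simp [hA, hPhi'0]
  have hAx : ∀ x, 0 ≤ x → A x = P x := by
    intro x hx; simp [hA, max_eq_left hx, min_eq_right hx]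
  have hAneg : ∀ x, x ≤ 0 → A x = x := by
    intro x hx; simp [hA, max_eq_right hx, min_eq_left hx, hPhi'0]
  have hAmono : StrictMono A := by
    intro x y hxy
    rcases le_or_gt 0 x with hx | hx
    · rw [hAx x hx, hAx y (hx.trans hxy.le)]
      exact hPmono hx (hx.trans hxy.le) hxy
    · have h1 : P (max x 0) ≤ P (max y 0) :=
        hPmono.monotoneOn (Set.mem_Ici.mpr (le_max_right _ _)) (Set.mem_Ici.mpr (le_max_right _ _))
          (max_le_max hxy.le le_rfl)
      have h2 : x < min y 0 := lt_min hxy hx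
      calc A x = P (max x 0) + x := by rw [hA]; simp [min_eq_left hx.le]
      _ < P (max y 0) + min y 0 := by linarith
      _ = A y := rfl
  have hAsurj : Function.Surjective A := by
    refine Continuous.surjective hAcont ?_ ?_
    · refine tendsto_atTop_atTop_of_monotone hAmono.monotone (fun b => ?_)
      obtain ⟨x, hx0, hxb⟩ := hunbdd b
      exact ⟨x, by rw [hAx x hx0]; exact hxb.le⟩
    · refine Tendsto.congr' ?_ tendsto_id
      filter_upwards [eventually_le_atBot (0:ℝ)] with x hx
      exact (hAneg x hx).symm
  obtain ⟨q, hqc, hqm, hq1, hq2⟩ := exists_cont_inverse A hAmono hAsurj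
  have hq0 : q 0 = 0 := by have := hq1 0; rwa [hA0] at this
  refine ⟨q, hqc, hqm, hq0, fun y hy => ?_⟩
  have hqy : 0 ≤ q y := by rw [← hq0]; exact hqm.monotone hy
  refine ⟨hqy, ?_⟩
  have := hq2 y
  rwa [hAx _ hqy] at this

end Phi

section BS
variable (q : ℝ → ℝ)

/-- Truncated inverse. -/
noncomputable def psifun : ℝ → ℝ := fun t => q (max t 0)

/-- The candidate for `(Ψ')⁻¹`. -/
noncomputable def Sfun : ℝ → ℝ := fun y => (2 * π) * ∫ t in (0:ℝ)..y, psifun q t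

/-- Globalized strictly monotone version of `Sfun`. -/
noncomputable def Bfun : ℝ → ℝ := fun y => Sfun q y + min y 0

variable {q} (hqc : Continuous q) (hqm : StrictMono q) (hq0 : q 0 = 0)
include hqc hqm hq0

lemma psifun_cont : Continuous (psifun q) :=
  hqc.comp (continuous_id.max continuous_const)

omit hqc in
lemma psifun_nonneg : ∀ t, 0 ≤ psifun q t := by
  intro t
  have := hqm.monotone (le_max_right t 0)
  simpa [psifun, hq0] using this

omit hqc in
lemma psifun_zero : ∀ t, t ≤ 0 → psifun q t = 0 := by
  intro t ht; rw [psifun]; simp [max_eq_right ht, hq0]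

omit hqc in
lemma psifun_pos : ∀ t, 0 < t → 0 < psifun q t := by
  intro t ht
  have := hqm (lt_of_lt_of_le ht (le_max_left t 0))
  simpa [psifun, hq0] using this

omit hqc in
lemma psifun_mono : Monotone (psifun q) := by
  intro s t hst; exact hqm.monotone (max_le_max hst le_rfl)

lemma hasDerivAt_Sfun (y : ℝ) : HasDerivAt (Sfun q) (2 * π * psifun q y) y := by
  have h := intervalIntegral.integral_hasDerivAt_right
    ((psifun_cont hqc hqm hq0).intervalIntegrable 0 y)
    ((psifun_cont hqc hqm hq0).stronglyMeasurableAtFilter _ _)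
    (psifun_cont hqc hqm hq0).continuousAt
  exact h.const_mul (2 * π)

lemma contDiff_Sfun : ContDiff ℝ 1 (Sfun q) := by
  rw [contDiff_one_iff_deriv]
  constructor
  · exact fun y => (hasDerivAt_Sfun hqc hqm hq0 y).differentiableAt
  · have : deriv (Sfun q) = fun y => 2 * π * psifun q y := by
      funext y; exact (hasDerivAt_Sfun hqc hqm hq0 y).deriv
    rw [this]
    exact continuous_const.mul (psifun_cont hqc hqm hq0)

omit hqc hqm hq0 in
lemma Sfun_zero : Sfun q 0 = 0 := by simp [Sfun]

omit hqc in
lemma Sfun_nonpos : ∀ y, y ≤ 0 → Sfun q y = 0 := by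
  intro y hy
  have : ∫ t in (0:ℝ)..y, psifun q t = ∫ t in (0:ℝ)..y, (0:ℝ) := by
    refine intervalIntegral.integral_congr (fun t ht => ?_)
    rcases ht with ⟨h1, h2⟩
    refine psifun_zero hqm hq0 t ?_
    rwa [max_eq_left hy] at h2
  simp [Sfun, this]

lemma Sfun_mono {x y : ℝ} (hxy : x ≤ y) : Sfun q x ≤ Sfun q y := by
  have h1 : Sfun q y - Sfun q x
      = 2 * π * ∫ t in x..y, psifun q t := by
    rw [Sfun, Sfun, ← mul_sub]
    congr 1
    rw [← intervalIntegral.integral_add_adjacent_intervals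
      ((psifun_cont hqc hqm hq0).intervalIntegrable 0 x)
      ((psifun_cont hqc hqm hq0).intervalIntegrable x y)]
    ring
  nlinarith [intervalIntegral.integral_nonneg (μ := volume) hxy (fun u _ => psifun_nonneg hqm hq0 u),
    pi_pos]

omit hqc in
lemma Bfun_nonpos : ∀ y, y ≤ 0 → Bfun q y = y := by
  intro y hy
  rw [Bfun, Sfun_nonpos hqm hq0 y hy, min_eq_left hy, zero_add]

omit hqc in
lemma Bfun_zero : Bfun q 0 = 0 := Bfun_nonpos hqm hq0 0 le_rfl

omit hqc in
lemma Bfun_eq_Sfun : ∀ y, 0 ≤ y → Bfun q y = Sfun q y := by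
  intro y hy
  rw [Bfun, min_eq_right hy, add_zero]

lemma Bfun_strictMono : StrictMono (Bfun q) := by
  intro x y hxy
  rcases lt_or_ge x 0 with hx | hx
  · have h1 : Sfun q x ≤ Sfun q y := Sfun_mono hqc hqm hq0 hxy.le
    have h2 : x < min y 0 := lt_min hxy hx
    have h3 : min x 0 = x := min_eq_left hx.le
    rw [Bfun, Bfun]; linarith
  · -- 0 ≤ x < y : the integral strictly increases
    have hpos : 0 < ∫ t in x..y, psifun q t := by
      refine intervalIntegral.intervalIntegral_pos_of_pos_on
        ((psifun_cont hqc hqm hq0).intervalIntegrable x y)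
        (fun t ht => psifun_pos hqm hq0 t (lt_of_le_of_lt hx ht.1)) hxy
    have h1 : Sfun q y - Sfun q x = 2 * π * ∫ t in x..y, psifun q t := by
      rw [Sfun, Sfun, ← mul_sub]
      congr 1
      rw [← intervalIntegral.integral_add_adjacent_intervals
        ((psifun_cont hqc hqm hq0).intervalIntegrable 0 x)
        ((psifun_cont hqc hqm hq0).intervalIntegrable x y)]
      ring
    have h2 : min x 0 = 0 := min_eq_right hx
    have h3 : min y 0 = 0 := min_eq_right (hx.trans hxy.le)
    rw [Bfun, Bfun, h2, h3]
    nlinarith [pi_pos]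

lemma Bfun_surjective : Function.Surjective (Bfun q) := by
  have hScont : Continuous (Sfun q) := (contDiff_Sfun hqc hqm hq0).continuous
  have hBcont : Continuous (Bfun q) :=
    hScont.add (continuous_id.min continuous_const)
  refine Continuous.surjective hBcont ?_ ?_
  · -- at top : Bfun q y ≥ 2π ψ(1) (y - 1)
    have key : ∀ y, 1 ≤ y → 2 * π * (psifun q 1 * (y - 1)) ≤ Bfun q y := by
      intro y hy
      rw [Bfun_eq_Sfun hqm hq0 y (le_trans zero_le_one hy)]
      have h1 : Sfun q y - Sfun q 1 = 2 * π * ∫ t in (1:ℝ)..y, psifun q t := by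
        rw [Sfun, Sfun, ← mul_sub]
        congr 1
        rw [← intervalIntegral.integral_add_adjacent_intervals
          ((psifun_cont hqc hqm hq0).intervalIntegrable 0 1)
          ((psifun_cont hqc hqm hq0).intervalIntegrable 1 y)]
        ring
      have h2 : psifun q 1 * (y - 1) ≤ ∫ t in (1:ℝ)..y, psifun q t := by
        have := intervalIntegral.integral_mono_on (μ := volume) hy
          (intervalIntegrable_const (c := psifun q 1))
          ((psifun_cont hqc hqm hq0).intervalIntegrable 1 y)
          (fun t ht => psifun_mono hqm hq0 ht.1)
        simpa [intervalIntegral.integral_const, smul_eq_mul, mul_comm] using this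
      have h3 : 0 ≤ Sfun q 1 := by
        rw [← Sfun_zero (q := q)]
        exact Sfun_mono hqc hqm hq0 zero_le_one
      nlinarith [pi_pos]
    have hψ1 : 0 < psifun q 1 := psifun_pos hqm hq0 1 one_pos
    have hlin : Tendsto (fun y : ℝ => 2 * π * (psifun q 1 * (y - 1))) atTop atTop := by
      refine Tendsto.const_mul_atTop (by positivity) ?_
      exact (tendsto_atTop_add_const_right _ _ tendsto_id).const_mul_atTop hψ1
    refine tendsto_atTop_mono' atTop ?_ hlin
    filter_upwards [eventually_ge_atTop (1:ℝ)] with y hy using key y hy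
  · refine Tendsto.congr' ?_ tendsto_id
    filter_upwards [eventually_le_atBot (0:ℝ)] with x hx
    exact (Bfun_nonpos hqm hq0 x hx).symm


lemma polar_aux {l : ℝ} (hl : 0 ≤ l) :
    ∫ y in Ioi (0:ℝ), y * psifun q (l - y^2/2) = ∫ t in (0:ℝ)..l, psifun q t := by
  set T := Real.sqrt (2*l) with hT
  have hT0 : 0 ≤ T := Real.sqrt_nonneg _
  have hTsq : T^2 = 2*l := Real.sq_sqrt (by linarith)
  have hzero : ∀ y, T < y → y * psifun q (l - y^2/2) = 0 := by
    intro y hy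
    have h1 : T^2 ≤ y^2 := by nlinarith
    have h2 : l - y^2/2 ≤ 0 := by nlinarith
    rw [psifun_zero hqm hq0 _ h2, mul_zero]
  have hcont : Continuous (fun y : ℝ => y * psifun q (l - y^2/2)) := by
    refine continuous_id.mul ((psifun_cont hqc hqm hq0).comp ?_)
    continuity
  have hsplit : (Ioi (0:ℝ)) = Ioc 0 T ∪ Ioi T := (Ioc_union_Ioi_eq_Ioi hT0).symm
  have hio : IntegrableOn (fun y : ℝ => y * psifun q (l - y^2/2)) (Ioc 0 T) :=
    hcont.integrableOn_Ioc
  have hi2 : IntegrableOn (fun y : ℝ => y * psifun q (l - y^2/2)) (Ioi T) := by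
    refine (integrableOn_congr_fun (fun y hy => hzero y hy) measurableSet_Ioi).mpr ?_
    exact integrableOn_zero
  have h2 : ∫ y in Ioi T, y * psifun q (l - y^2/2) = 0 := by
    rw [setIntegral_congr_fun measurableSet_Ioi (fun y hy => hzero y hy)]
    exact integral_zero _ _
  have hder : ∀ x ∈ uIcc (0:ℝ) T, HasDerivAt (fun x : ℝ => l - x^2/2) (-x) x := by
    intro x _
    have h := ((hasDerivAt_pow 2 x).div_const 2).const_sub l
    simpa using h
  have hsub := intervalIntegral.integral_comp_smul_deriv hder
    (by fun_prop : ContinuousOn (fun x : ℝ => -x) (uIcc (0:ℝ) T))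
    (psifun_cont hqc hqm hq0)
  have hend : l - T^2/2 = 0 := by rw [hTsq]; ring
  rw [hsplit, setIntegral_union (Ioc_disjoint_Ioi le_rfl) measurableSet_Ioi hio hi2, h2,
    add_zero, ← intervalIntegral.integral_of_le hT0]
  have hL : ∫ x in (0:ℝ)..T, (-x) • (psifun q ∘ fun x : ℝ => l - x^2/2) x
      = - ∫ x in (0:ℝ)..T, x * psifun q (l - x^2/2) := by
    rw [← intervalIntegral.integral_neg]
    congr 1; funext x; simp [Function.comp, neg_mul]
  rw [hL, hend] at hsub
  have h4 : (∫ x in l..(0:ℝ), psifun q x) = -∫ t in (0:ℝ)..l, psifun q t :=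
    intervalIntegral.integral_symm 0 l
  norm_num at hsub
  linarith [hsub, h4]

lemma glam_integral {l : ℝ} (hl : 0 ≤ l) :
    ∫ v : Plane, psifun q (l - ‖v‖^2/2) = Bfun q l := by
  have key := integral_fun_norm_addHaar (volume : Measure Plane)
    (fun r => psifun q (l - r^2/2))
  have hfr : Module.finrank ℝ Plane = 2 := finrank_euclideanSpace_fin
  rw [hfr] at key
  have hball : (volume (Metric.ball (0:Plane) 1)).toReal = π := by
    rw [EuclideanSpace.volume_ball]
    simp only [Fintype.card_fin]
    rw [show ((2:ℕ):ℝ)/2 + 1 = 2 by norm_num, Real.Gamma_two]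
    rw [show (Real.sqrt π)^2 = π from Real.sq_sqrt pi_nonneg]
    simp [ENNReal.toReal_ofReal pi_nonneg]
  rw [measureReal_def, hball] at key
  simp only [show (2:ℕ) - 1 = 1 from rfl, pow_one, smul_eq_mul, nsmul_eq_mul,
    Nat.cast_ofNat] at key
  calc ∫ v : Plane, psifun q (l - ‖v‖^2/2) = 2 * (π * ∫ y in Ioi (0:ℝ), y * psifun q (l - y^2/2)) := key
    _ = 2 * π * ∫ t in (0:ℝ)..l, psifun q t := by rw [polar_aux hqc hqm hq0 hl]; ring
    _ = Sfun q l := rfl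
    _ = Bfun q l := (Bfun_eq_Sfun hqm hq0 l hl).symm

end BS

section Master
variable {Φ : ℝ → ℝ} {q : ℝ → ℝ}
variable (hPhiC2 : ContDiffOn ℝ 2 Φ (Set.Ici 0)) (hPhi0 : Φ 0 = 0)
  (hPhi'0 : derivWithin Φ (Set.Ici 0) 0 = 0)
  (hPhi'' : ∀ x ∈ Set.Ici (0 : ℝ),
      0 < derivWithin (derivWithin Φ (Set.Ici 0)) (Set.Ici 0) x)
  (hqc : Continuous q) (hqm : StrictMono q) (hq0 : q 0 = 0)
  (hqinv : ∀ y, 0 ≤ y → 0 ≤ q y ∧ derivWithin Φ (Set.Ici 0) (q y) = y)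

/-- The explicit minimizer. -/
noncomputable def glam (q : ℝ → ℝ) (l : ℝ) : Plane → ℝ :=
  fun v => psifun q (l - ‖v‖ ^ 2 / 2)

include hqc hqm hq0

lemma glam_cont (l : ℝ) : Continuous (glam q l) := by
  refine (psifun_cont hqc hqm hq0).comp ?_
  fun_prop

omit hqc in
lemma glam_nonneg (l : ℝ) : ∀ v, 0 ≤ glam q l v :=
  fun v => psifun_nonneg hqm hq0 _

omit hqc in
lemma glam_compact_zero (l : ℝ) :
    ∀ v : Plane, v ∉ Metric.closedBall (0:Plane) (Real.sqrt (2*l)) → glam q l v = 0 := by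
  intro v hv
  rw [Metric.mem_closedBall, dist_zero_right] at hv
  push_neg at hv
  have h0 : 0 ≤ ‖v‖ := norm_nonneg v
  have h1 : Real.sqrt (2*l) ^ 2 ≤ ‖v‖ ^ 2 := by
    nlinarith [Real.sqrt_nonneg (2*l)]
  have h2 : l - ‖v‖ ^ 2 / 2 ≤ 0 := by
    rcases le_or_gt l 0 with h | h
    · nlinarith
    · nlinarith [Real.sq_sqrt (by linarith : (0:ℝ) ≤ 2*l)]
  exact psifun_zero hqm hq0 _ h2

lemma glam_hasCompactSupport (l : ℝ) : HasCompactSupport (glam q l) :=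
  HasCompactSupport.intro (isCompact_closedBall _ _) (glam_compact_zero hqm hq0 l)

lemma glam_integrable (l : ℝ) : Integrable (glam q l) :=
  (glam_cont hqc hqm hq0 l).integrable_of_hasCompactSupport
    (glam_hasCompactSupport hqc hqm hq0 l)

include hPhiC2 hPhi0 in
lemma glam_energy_integrable (l : ℝ) :
    Integrable (fun v : Plane => (‖v‖ ^ 2 / 2) * glam q l v + Φ (glam q l v)) := by
  have hcont : Continuous (fun v : Plane => (‖v‖ ^ 2 / 2) * glam q l v + Φ (glam q l v)) := by
    refine Continuous.add ?_ ?_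
    · exact (continuous_norm.pow 2 |>.div_const 2).mul (glam_cont hqc hqm hq0 l)
    · exact hPhiC2.continuousOn.comp_continuous (glam_cont hqc hqm hq0 l)
        (fun v => glam_nonneg hqm hq0 l v)
  refine hcont.integrable_of_hasCompactSupport ?_
  refine HasCompactSupport.intro (isCompact_closedBall (0:Plane) (Real.sqrt (2*l))) ?_
  intro v hv
  rw [glam_compact_zero hqm hq0 l v hv, hPhi0]
  ring

include hPhiC2 hPhi0 in
lemma glam_mem (l : ℝ) (hl : 0 ≤ l) : glam q l ∈ Gset Φ (Bfun q l) :=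
  ⟨glam_integrable hqc hqm hq0 l, glam_nonneg hqm hq0 l,
    glam_energy_integrable hPhiC2 hPhi0 hqc hqm hq0 l, glam_integral hqc hqm hq0 hl⟩

omit hqc in
include hPhiC2 hPhi'' hqinv in
lemma pointwise_master {l : ℝ} (hl : 0 ≤ l) (v : Plane) {b : ℝ} (hb : 0 ≤ b) :
    (‖v‖ ^ 2 / 2) * glam q l v + Φ (glam q l v) - l * glam q l v
      ≤ (‖v‖ ^ 2 / 2) * b + Φ b - l * b := by
  set u : ℝ := ‖v‖ ^ 2 / 2 with hu
  have hu0 : 0 ≤ u := by positivity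
  set a : ℝ := glam q l v with ha
  have ha0 : 0 ≤ a := glam_nonneg hqm hq0 l v
  have hgrad := phi_grad_ineq hPhiC2 hPhi'' ha0 hb
  have hPa : derivWithin Φ (Set.Ici 0) a = max (l - u) 0 := by
    rw [ha]
    exact (hqinv _ (le_max_right _ _)).2
  rw [hPa] at hgrad
  rcases le_or_gt u l with h | h
  · rw [max_eq_left (by linarith)] at hgrad
    nlinarith
  · have haz : a = 0 := psifun_zero hqm hq0 _ (by linarith)
    rw [max_eq_right (by linarith)] at hgrad
    rw [haz] at hgrad ⊢
    nlinarith

include hPhiC2 hPhi0 hPhi'' hqinv in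
lemma master_ineq {l r : ℝ} (hl : 0 ≤ l) {g : Plane → ℝ} (hg : g ∈ Gset Φ r) :
    Ifun Φ (glam q l) + l * (r - Bfun q l) ≤ Ifun Φ g := by
  obtain ⟨hgint, hgnn, hgen, hgsum⟩ := hg
  have hIl : Integrable (fun v : Plane =>
      (‖v‖ ^ 2 / 2) * glam q l v + Φ (glam q l v) - l * glam q l v) :=
    (glam_energy_integrable hPhiC2 hPhi0 hqc hqm hq0 l).sub
      ((glam_integrable hqc hqm hq0 l).const_mul l)
  have hIg : Integrable (fun v : Plane =>
      (‖v‖ ^ 2 / 2) * g v + Φ (g v) - l * g v) := hgen.sub (hgint.const_mul l)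
  have hmono := integral_mono hIl hIg
    (fun v => pointwise_master hPhiC2 hPhi'' hqm hq0 hqinv hl v (hgnn v))
  rw [integral_sub (glam_energy_integrable hPhiC2 hPhi0 hqc hqm hq0 l)
      ((glam_integrable hqc hqm hq0 l).const_mul l),
    integral_sub hgen (hgint.const_mul l)] at hmono
  have hgl : ∫ v : Plane, glam q l v = Bfun q l := glam_integral hqc hqm hq0 hl
  have h1 : ∫ v : Plane, l * glam q l v = l * Bfun q l := by
    rw [integral_const_mul, hgl]
  have h2 : ∫ v : Plane, l * g v = l * r := by
    rw [integral_const_mul, hgsum]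
  rw [h1, h2] at hmono
  have e1 : Ifun Φ (glam q l)
      = ∫ v : Plane, ((‖v‖ ^ 2 / 2) * glam q l v + Φ (glam q l v)) := rfl
  have e2 : Ifun Φ g = ∫ v : Plane, ((‖v‖ ^ 2 / 2) * g v + Φ (g v)) := rfl
  rw [e1, e2]
  linarith



include hPhiC2 hPhi0 hPhi'' hqinv in
lemma psi_value {l : ℝ} (hl : 0 ≤ l) : Psi Φ (Bfun q l) = Ifun Φ (glam q l) := by
  have hmem : Ifun Φ (glam q l) ∈ Ifun Φ '' Gset Φ (Bfun q l) :=
    ⟨glam q l, glam_mem hPhiC2 hPhi0 hqc hqm hq0 l hl, rfl⟩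
  have hlb : ∀ y ∈ Ifun Φ '' Gset Φ (Bfun q l), Ifun Φ (glam q l) ≤ y := by
    rintro y ⟨g, hg, rfl⟩
    have h := master_ineq hPhiC2 hPhi0 hPhi'' hqc hqm hq0 hqinv hl hg
    simpa using h
  exact le_antisymm (csInf_le ⟨_, mem_lowerBounds.2 hlb⟩ hmem) (le_csInf ⟨_, hmem⟩ hlb)

include hPhiC2 hPhi0 hPhi'' hqinv in
lemma psi_lb {l l' : ℝ} (hl : 0 ≤ l) (hl' : 0 ≤ l') :
    Psi Φ (Bfun q l) + l * (Bfun q l' - Bfun q l) ≤ Psi Φ (Bfun q l') := by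
  rw [psi_value hPhiC2 hPhi0 hPhi'' hqc hqm hq0 hqinv hl,
    psi_value hPhiC2 hPhi0 hPhi'' hqc hqm hq0 hqinv hl']
  exact master_ineq hPhiC2 hPhi0 hPhi'' hqc hqm hq0 hqinv hl
    (glam_mem hPhiC2 hPhi0 hqc hqm hq0 l' hl')


end Master

/-- A function with a continuously-varying supporting line is differentiable. -/
lemma hasDeriv_squeeze (f L : ℝ → ℝ) (hL : ContinuousOn L (Set.Ici 0))
    (hsub : ∀ x ∈ Set.Ici (0:ℝ), ∀ r ∈ Set.Ici (0:ℝ), f x + L x * (r - x) ≤ f r)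
    {x : ℝ} (hx : x ∈ Set.Ici (0:ℝ)) : HasDerivWithinAt f (L x) (Set.Ici 0) x := by
  rw [hasDerivWithinAt_iff_isLittleO, Asymptotics.isLittleO_iff]
  intro ε hε
  have h1 : ∀ᶠ y in 𝓝[Set.Ici 0] x, |L y - L x| ≤ ε := by
    have h2 : Tendsto L (𝓝[Set.Ici 0] x) (𝓝 (L x)) := hL x hx
    have h3 := h2.eventually (Metric.closedBall_mem_nhds (L x) hε)
    filter_upwards [h3] with y hy
    rw [Real.dist_eq] at hy
    exact hy
  filter_upwards [h1, self_mem_nhdsWithin] with y hy hymem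
  have k1 := hsub x hx y hymem
  have k2 := hsub y hymem x hx
  have hD0 : 0 ≤ f y - f x - L x * (y - x) := by linarith
  have hD1 : f y - f x - L x * (y - x) ≤ (L y - L x) * (y - x) := by nlinarith
  have habs : (L y - L x) * (y - x) ≤ |L y - L x| * |y - x| := by
    calc (L y - L x) * (y - x) ≤ |(L y - L x) * (y - x)| := le_abs_self _
      _ = |L y - L x| * |y - x| := abs_mul _ _
  rw [smul_eq_mul, Real.norm_eq_abs, Real.norm_eq_abs, abs_of_nonneg (by linarith : 
    (0:ℝ) ≤ f y - f x - (y - x) * L x)]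
  nlinarith [abs_nonneg (y - x), mul_le_mul_of_nonneg_right hy (abs_nonneg (y - x))]


theorem inverse_psi_deriv_C1
    (k c : ℝ) (hk0 : 0 < k) (hk1 : k < 1) (hc : 0 < c)
    (Φ : ℝ → ℝ)
    (hPhiC2 : ContDiffOn ℝ 2 Φ (Set.Ici 0))
    (hPhi0 : Φ 0 = 0)
    (hPhi'0 : derivWithin Φ (Set.Ici 0) 0 = 0)
    (hPhi'' : ∀ x ∈ Set.Ici (0 : ℝ),
      0 < derivWithin (derivWithin Φ (Set.Ici 0)) (Set.Ici 0) x)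
    (hPhiGrowth : ∃ x₀ : ℝ, ∀ x : ℝ, x₀ ≤ x → c * x ^ (1 + 1 / k) ≤ Φ x)
 :
    ContDiffOn ℝ 1 (invDerivOn (Psi Φ)) (Set.Ici 0) := by
  have hunbdd := phi'_unbounded hk0 hk1 hc hPhiC2 hPhiGrowth
  obtain ⟨q, hqc, hqm, hq0, hqinv⟩ := exists_phi'_inv hPhiC2 hPhi'0 hPhi'' hunbdd
  obtain ⟨Ri, hRic, hRim, hRi1, hRi2⟩ := exists_cont_inverse (Bfun q)
    (Bfun_strictMono hqc hqm hq0) (Bfun_surjective hqc hqm hq0)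
  have hRi0 : Ri 0 = 0 := by have := hRi1 0; rwa [Bfun_zero hqm hq0] at this
  have hRinn : ∀ x : ℝ, 0 ≤ x → 0 ≤ Ri x := fun x hx => by
    rw [← hRi0]; exact hRim.monotone hx
  have hsub : ∀ x ∈ Set.Ici (0:ℝ), ∀ r ∈ Set.Ici (0:ℝ),
      Psi Φ x + Ri x * (r - x) ≤ Psi Φ r := by
    intro x hx r hr
    have h1 := psi_lb hPhiC2 hPhi0 hPhi'' hqc hqm hq0 hqinv (hRinn x hx) (hRinn r hr)
    rwa [hRi2 x, hRi2 r] at h1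
  have hderiv : ∀ x ∈ Set.Ici (0:ℝ), derivWithin (Psi Φ) (Set.Ici 0) x = Ri x := by
    intro x hx
    exact (hasDeriv_squeeze (Psi Φ) Ri hRic.continuousOn hsub hx).derivWithin
      (uniqueDiffOn_Ici 0 x hx)
  have hderivneg : ∀ x : ℝ, x < 0 → derivWithin (Psi Φ) (Set.Ici 0) x = 0 := by
    intro x hx
    apply derivWithin_zero_of_notMem_closure
    rw [closure_Ici]
    exact not_le.mpr hx
  have hinv : ∀ y ∈ Set.Ici (0:ℝ), invDerivOn (Psi Φ) y = Sfun q y := by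
    intro y hy
    rcases eq_or_lt_of_le (Set.mem_Ici.mp hy) with h0 | h0
    · rw [invDerivOn, if_pos (le_of_eq h0.symm), ← h0, Sfun_zero]
    · rw [invDerivOn, if_neg (not_le.mpr h0)]
      have hBy : 0 ≤ Bfun q y := by
        rw [← Bfun_zero hqm hq0 (q := q)]
        exact (Bfun_strictMono hqc hqm hq0).monotone (Set.mem_Ici.mp hy)
      have hexists : derivWithin (Psi Φ) (Set.Ici 0) (Bfun q y) = y := by
        rw [hderiv _ hBy, hRi1]
      have hfe : derivWithin (Psi Φ) (Set.Ici 0)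
          (Function.invFun (derivWithin (Psi Φ) (Set.Ici 0)) y) = y :=
        Function.invFun_eq ⟨Bfun q y, hexists⟩
      have hx'0 : 0 ≤ Function.invFun (derivWithin (Psi Φ) (Set.Ici 0)) y := by
        by_contra hneg
        push_neg at hneg
        rw [hderivneg _ hneg] at hfe
        exact h0.ne hfe
      have hRx' : Ri (Function.invFun (derivWithin (Psi Φ) (Set.Ici 0)) y) = y := by
        rw [← hderiv _ hx'0]; exact hfe
      have hxB : Function.invFun (derivWithin (Psi Φ) (Set.Ici 0)) y = Bfun q y :=
        hRim.injective (hRx'.trans (hRi1 y).symm)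
      rw [hxB]
      exact Bfun_eq_Sfun hqm hq0 y (Set.mem_Ici.mp hy)
  exact ((contDiff_Sfun hqc hqm hq0).contDiffOn).congr hinv
end
end
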